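/- arXiv:1707.02799 — 6 statements merged into one kernel-verified Lean document; each statement's English description precedes it below -/
import Mathlib

section
/- For every 0 ≤ k ≤ n−1 and every φ ∈ C^k(X,ℝ), d*dφ = (k+2) M⁺_k φ; and for every 0 ≤ k ≤ n and every φ ∈ C^k(X,ℝ) (with k ≥ 1 or interpreting the empty sums as zero), dd*φ = (k+1) M⁻_k φ. -/
/-!
Framework: a pure `n`-dimensional finite weighted simplicial complex, following
Kaufman–Oppenheim, "High Order Random Walks: Beyond Spectral Gap".

A complex is given by its finset of faces (finsets of a vertex type `V`) together with
a weight function `m`.  We index levels by **cardinality**: `X.K c` is the set of faces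
with `c` elements, i.e. the set `X(k)` of `k`-dimensional faces for `k = c - 1`
(so `X(-1) = X.K 0`, and a pure `n`-dimensional complex has top level `X.K (n+1)`).
-/

noncomputable section

open Finset

/-- The data of a weighted simplicial complex: a finite family of faces and a weight. -/
structure WSC (V : Type*) [DecidableEq V] where
  faces : Finset (Finset V)
  m : Finset V → ℝ

namespace WSC

variable {V : Type*} [DecidableEq V]

/-- `X.IsWSC n` : `X` is a pure `n`-dimensional finite weighted simplicial complex:
the faces form a nonempty downward-closed family, every face is contained in a face with
`n+1` elements (and no face has more), the weights are positive, and the weight of every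
face of cardinality `≤ n` is the sum of the weights of the faces covering it. -/
def IsWSC (X : WSC V) (n : ℕ) : Prop :=
  ∅ ∈ X.faces ∧
  (∀ ⦃σ τ : Finset V⦄, σ ∈ X.faces → τ ⊆ σ → τ ∈ X.faces) ∧
  (∀ ⦃σ⦄, σ ∈ X.faces → σ.card ≤ n + 1) ∧
  (∀ ⦃σ⦄, σ ∈ X.faces → ∃ η ∈ X.faces, σ ⊆ η ∧ η.card = n + 1) ∧
  (∀ ⦃σ⦄, σ ∈ X.faces → 0 < X.m σ) ∧
  (∀ ⦃τ⦄, τ ∈ X.faces → τ.card ≤ n →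
    X.m τ = ∑ σ ∈ X.faces.filter (fun σ => τ ⊆ σ ∧ σ.card = τ.card + 1), X.m σ)

/-- `X.K c` : the faces with `c` elements, i.e. `X(c-1)` in dimension indexing. -/
def K (X : WSC V) (c : ℕ) : Finset (Finset V) := X.faces.filter (fun σ => σ.card = c)

/-- The weighted inner product on cochains supported on the faces with `c` elements. -/
def inn (X : WSC V) (c : ℕ) (φ ψ : Finset V → ℝ) : ℝ :=
  ∑ σ ∈ X.K c, X.m σ * (φ σ * ψ σ)

/-- The squared norm of a cochain on the faces with `c` elements. -/
def normSq (X : WSC V) (c : ℕ) (φ : Finset V → ℝ) : ℝ := X.inn c φ φ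

/-- The norm of a cochain on the faces with `c` elements. -/
def norm (X : WSC V) (c : ℕ) (φ : Finset V → ℝ) : ℝ := Real.sqrt (X.normSq c φ)

/-- `X.cochainZero c φ` : φ belongs to `C^{c-1}_0 (X, ℝ)`, i.e. it is orthogonal to the
constant functions at level `c`. -/
def cochainZero (X : WSC V) (c : ℕ) (φ : Finset V → ℝ) : Prop :=
  ∑ σ ∈ X.K c, X.m σ * φ σ = 0

/-- The signless differential, from cochains at level `c` to cochains at level `c+1`:
`(d φ)(σ) = ∑_{τ ∈ X(c-1), τ ⊂ σ} φ(τ)`. -/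
def d (X : WSC V) (c : ℕ) (φ : Finset V → ℝ) : Finset V → ℝ :=
  fun σ => ∑ τ ∈ (X.K c).filter (fun τ => τ ⊆ σ), φ τ

/-- The (explicit formula for the) adjoint of the signless differential, from cochains at
level `c+1` to cochains at level `c`: `(d* ψ)(τ) = ∑_{σ ⊇ τ} (m σ / m τ) ψ(σ)`. -/
def dStar (X : WSC V) (c : ℕ) (ψ : Finset V → ℝ) : Finset V → ℝ :=
  fun τ => ∑ σ ∈ (X.K (c + 1)).filter (fun σ => τ ⊆ σ), (X.m σ / X.m τ) * ψ σ

/-- The (lazy) upper random walk operator `M⁺` on cochains at level `c`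
(i.e. on `k`-cochains for `k = c-1`; note `k + 2 = c + 1`). -/
def Mup (X : WSC V) (c : ℕ) (φ : Finset V → ℝ) : Finset V → ℝ :=
  fun τ => (1 / ((c : ℝ) + 1)) * φ τ +
    ∑ τ' ∈ (X.K c).filter (fun τ' => τ ∪ τ' ∈ X.K (c + 1)),
      (X.m (τ ∪ τ') / (((c : ℝ) + 1) * X.m τ)) * φ τ'

/-- The lower random walk operator `M⁻` on cochains at level `c`
(i.e. on `k`-cochains for `k = c-1`; note `k + 1 = c`). -/
def Mdown (X : WSC V) (c : ℕ) (φ : Finset V → ℝ) : Finset V → ℝ :=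
  fun τ => (∑ η ∈ (X.K (c - 1)).filter (fun η => η ⊆ τ), X.m τ / ((c : ℝ) * X.m η)) * φ τ +
    ∑ τ' ∈ (X.K c).filter (fun τ' => τ' ≠ τ ∧ τ ∩ τ' ∈ X.K (c - 1)),
      (X.m τ' / ((c : ℝ) * X.m (τ ∩ τ'))) * φ τ'

/-- The non-lazy upper random walk operator `(M')⁺ = ((k+2)/(k+1)) M⁺ - (1/(k+1)) I`
on cochains at level `c = k+1`. -/
def Mup' (X : WSC V) (c : ℕ) (φ : Finset V → ℝ) : Finset V → ℝ :=
  fun τ => (((c : ℝ) + 1) / (c : ℝ)) * X.Mup c φ τ - (1 / (c : ℝ)) * φ τ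

/-- The link `X_τ` of a face `τ`, with the induced weight `m_τ (η) = m (τ ∪ η)`. -/
def link (X : WSC V) (τ : Finset V) : WSC V where
  faces := X.faces.filter (fun η => η ∩ τ = ∅ ∧ τ ∪ η ∈ X.faces)
  m := fun η => X.m (τ ∪ η)

/-- The localization `φ_τ (η) = φ (τ ∪ η)` of a cochain `φ` to the link of `τ`. -/
def localize (φ : Finset V → ℝ) (τ : Finset V) : Finset V → ℝ := fun η => φ (τ ∪ η)

/-- The underlying graph (1-skeleton) of a complex. -/
def skeleton (Y : WSC V) : SimpleGraph {v : V // ({v} : Finset V) ∈ Y.faces} where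
  Adj u w := u ≠ w ∧ ({(u : V), (w : V)} : Finset V) ∈ Y.faces
  symm := by
    constructor
    intro u w h
    refine ⟨h.1.symm, ?_⟩
    rw [Finset.pair_comm]
    exact h.2
  loopless := by constructor; intro u h; exact h.1 rfl

/-- All links of `X` of dimension `≥ 1` (including `X` itself, as the link of `∅`)
have a connected underlying graph. -/
def LinksConnected (X : WSC V) (n : ℕ) : Prop :=
  ∀ c < n, ∀ τ ∈ X.K c, (X.link τ).skeleton.Connected

/-- The second largest eigenvalue of the self-adjoint operator `(M')⁺₀` on `C⁰(Y, ℝ)`,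
via its Rayleigh-quotient characterization over the orthogonal complement of the
constant functions (the top eigenfunction). -/
def secondEig (Y : WSC V) : ℝ :=
  sSup {r : ℝ | ∃ ψ : Finset V → ℝ, Y.normSq 1 ψ ≠ 0 ∧
    (∑ v ∈ Y.K 1, Y.m v * ψ v) = 0 ∧ r = Y.inn 1 (Y.Mup' 1 ψ) ψ / Y.normSq 1 ψ}

/-- The smallest eigenvalue of the self-adjoint operator `(M')⁺₀` on `C⁰(Y, ℝ)`,
via its Rayleigh-quotient characterization. -/
def smallestEig (Y : WSC V) : ℝ :=
  sInf {r : ℝ | ∃ ψ : Finset V → ℝ, Y.normSq 1 ψ ≠ 0 ∧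
    r = Y.inn 1 (Y.Mup' 1 ψ) ψ / Y.normSq 1 ψ}

/-- `μ_k = max_{τ ∈ X(k-1)} μ_τ` where `μ_τ` is the second largest eigenvalue of
`(M')⁺_{τ,0}`; faces `τ ∈ X(k-1)` have `k` elements. -/
def mu (X : WSC V) (k : ℕ) : ℝ :=
  sSup {r : ℝ | ∃ τ ∈ X.K k, r = (X.link τ).secondEig}

/-- `ν_k = min_{τ ∈ X(k-1)} ν_τ` where `ν_τ` is the smallest eigenvalue of
`(M')⁺_{τ,0}`; faces `τ ∈ X(k-1)` have `k` elements. -/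
def nu (X : WSC V) (k : ℕ) : ℝ :=
  sInf {r : ℝ | ∃ τ ∈ X.K k, r = (X.link τ).smallestEig}

/-- `X` is a one-sided `λ`-local spectral expander: `μ_k ≤ λ` for every `0 ≤ k ≤ n-1`. -/
def OneSided (X : WSC V) (n : ℕ) (lam : ℝ) : Prop := ∀ k < n, X.mu k ≤ lam

/-- `X` is a two-sided `λ`-local spectral expander: `μ_k ≤ λ` and `ν_k ≥ -λ`
for every `0 ≤ k ≤ n-1`. -/
def TwoSided (X : WSC V) (n : ℕ) (lam : ℝ) : Prop :=
  ∀ k < n, X.mu k ≤ lam ∧ -lam ≤ X.nu k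

end WSC

open WSC
/-- For every `0 ≤ k ≤ n-1` and `φ ∈ C^k(X,ℝ)`, `d*dφ = (k+2) M⁺_k φ`;
and for every `0 ≤ k ≤ n` and `φ ∈ C^k(X,ℝ)`, `dd*φ = (k+1) M⁻_k φ`.
(Cardinality level `c = k + 1 ≥ 1`, so `k + 2 = c + 1` and `k + 1 = c`; the equalities
are between cochains, i.e. hold on every face of `X(k)`.) -/
theorem dStar_d_eq_Mup_and_d_dStar_eq_Mdown {V : Type*} [DecidableEq V] (X : WSC V)
    (n : ℕ) (hX : X.IsWSC n) (c : ℕ) (hc : 1 ≤ c) :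
    (c ≤ n → ∀ φ : Finset V → ℝ, ∀ τ ∈ X.K c,
      X.dStar c (X.d c φ) τ = ((c : ℝ) + 1) * X.Mup c φ τ) ∧
    (c ≤ n + 1 → ∀ φ : Finset V → ℝ, ∀ τ ∈ X.K c,
      X.d (c - 1) (X.dStar (c - 1) φ) τ = (c : ℝ) * X.Mdown c φ τ) := by
  obtain ⟨hempty, hdown, hcard, htop, hpos, hwt⟩ := hX
  have mem_K : ∀ {σ : Finset V} {a : ℕ}, σ ∈ X.K a ↔ σ ∈ X.faces ∧ σ.card = a := by
    intro σ a; simp [WSC.K, Finset.mem_filter]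
  constructor
  · -- Part 1
    intro hcn φ τ hτ
    obtain ⟨hτf, hτc⟩ := mem_K.mp hτ
    have hmτ : X.m τ ≠ 0 := ne_of_gt (hpos hτf)
    have hc1 : ((c : ℝ) + 1) ≠ 0 := by positivity
    set S := (X.K (c + 1)).filter (fun σ => τ ⊆ σ) with hS
    have hτT : ∀ σ ∈ S, τ ∈ (X.K c).filter (fun τ' => τ' ⊆ σ) := by
      intro σ hσ
      simp only [hS, Finset.mem_filter] at hσ ⊢
      exact ⟨mem_K.mpr ⟨hτf, hτc⟩, hσ.2⟩
    have hunion : ∀ σ ∈ S, ∀ τ' ∈ ((X.K c).filter (fun τ' => τ' ⊆ σ)).erase τ,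
        τ ∪ τ' = σ := by
      intro σ hσ τ' hτ'
      simp only [hS, Finset.mem_filter] at hσ
      simp only [Finset.mem_erase, Finset.mem_filter] at hτ'
      obtain ⟨hne, ⟨hτ'K, hτ'σ⟩⟩ := hτ'
      obtain ⟨hσK, hτσ⟩ := hσ
      obtain ⟨hσf, hσc⟩ := mem_K.mp hσK
      obtain ⟨hτ'f, hτ'c⟩ := mem_K.mp hτ'K
      have hsub : τ ∪ τ' ⊆ σ := Finset.union_subset hτσ hτ'σ
      have hnsub : ¬ τ' ⊆ τ := by
        intro h
        exact hne (Finset.eq_of_subset_of_card_le h (by omega))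
      obtain ⟨x, hx, hxτ⟩ := Finset.not_subset.mp hnsub
      have hins : insert x τ ⊆ τ ∪ τ' := by
        intro y hy
        rcases Finset.mem_insert.mp hy with rfl | hy
        · exact Finset.mem_union_right _ hx
        · exact Finset.mem_union_left _ hy
      have hcard2 : c + 1 ≤ (τ ∪ τ').card := by
        have h := Finset.card_le_card hins
        rwa [Finset.card_insert_of_notMem hxτ, hτc] at h
      exact Finset.eq_of_subset_of_card_le hsub (by omega)
    have expand : X.dStar c (X.d c φ) τ
        = ∑ σ ∈ S, ((X.m σ / X.m τ) * φ τ
            + ∑ τ' ∈ ((X.K c).filter (fun τ' => τ' ⊆ σ)).erase τ,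
                (X.m σ / X.m τ) * φ τ') := by
      unfold WSC.dStar WSC.d
      refine Finset.sum_congr rfl (fun σ hσ => ?_)
      rw [Finset.mul_sum, ← Finset.add_sum_erase _ _ (hτT σ hσ)]
    have hw : ∑ σ ∈ S, X.m σ = X.m τ := by
      rw [hwt hτf (by omega : τ.card ≤ n)]
      apply Finset.sum_congr _ (fun _ _ => rfl)
      ext σ
      simp only [hS, WSC.K, Finset.mem_filter, Finset.filter_filter, hτc]
      tauto
    have h1 : ∑ σ ∈ S, (X.m σ / X.m τ) * φ τ = φ τ := by
      calc ∑ σ ∈ S, (X.m σ / X.m τ) * φ τ = (∑ σ ∈ S, X.m σ) / X.m τ * φ τ := by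
            rw [Finset.sum_div, Finset.sum_mul]
        _ = φ τ := by rw [hw, div_self hmτ, one_mul]
    have h2 : ∑ σ ∈ S, ∑ τ' ∈ ((X.K c).filter (fun τ' => τ' ⊆ σ)).erase τ,
          (X.m σ / X.m τ) * φ τ'
        = ∑ τ' ∈ (X.K c).filter (fun τ' => τ ∪ τ' ∈ X.K (c + 1)),
            (X.m (τ ∪ τ') / X.m τ) * φ τ' := by
      rw [Finset.sum_sigma']
      refine Finset.sum_nbij' (fun p => p.2) (fun τ' => ⟨τ ∪ τ', τ'⟩) ?_ ?_ ?_ ?_ ?_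
      · intro p hp
        obtain ⟨hσ, hτ'⟩ := Finset.mem_sigma.mp hp
        have huni := hunion _ hσ _ hτ'
        simp only [Finset.mem_erase, Finset.mem_filter] at hτ'
        refine Finset.mem_filter.mpr ⟨hτ'.2.1, ?_⟩
        rw [huni]
        simp only [hS, Finset.mem_filter] at hσ
        exact hσ.1
      · intro τ' hτ'
        obtain ⟨hτ'K, huK⟩ := Finset.mem_filter.mp hτ'
        refine Finset.mem_sigma.mpr ⟨?_, ?_⟩
        · exact Finset.mem_filter.mpr ⟨huK, Finset.subset_union_left⟩
        · refine Finset.mem_erase.mpr ⟨?_,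
            Finset.mem_filter.mpr ⟨hτ'K, Finset.subset_union_right⟩⟩
          intro heq
          have heq' : τ' = τ := heq
          subst heq'
          have h := (mem_K.mp huK).2
          rw [Finset.union_self, hτc] at h
          omega
      · intro p hp
        obtain ⟨hσ, hτ'⟩ := Finset.mem_sigma.mp hp
        exact Sigma.ext (hunion _ hσ _ hτ') HEq.rfl
      · intro τ' hτ'; rfl
      · intro p hp
        obtain ⟨hσ, hτ'⟩ := Finset.mem_sigma.mp hp
        rw [hunion _ hσ _ hτ']
    rw [expand, Finset.sum_add_distrib, h1, h2]
    unfold WSC.Mup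
    rw [mul_add]
    congr 1
    · field_simp
    · rw [Finset.mul_sum]
      refine Finset.sum_congr rfl (fun τ' _ => ?_)
      field_simp
  · -- Part 2
    intro hcn φ τ hτ
    obtain ⟨hτf, hτc⟩ := mem_K.mp hτ
    have hc0 : (c : ℝ) ≠ 0 := Nat.cast_ne_zero.mpr (by omega)
    have hcsub : c - 1 + 1 = c := Nat.sub_add_cancel hc
    set S := (X.K (c - 1)).filter (fun η => η ⊆ τ) with hS
    have hτT : ∀ η ∈ S, τ ∈ (X.K (c - 1 + 1)).filter (fun σ => η ⊆ σ) := by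
      intro η hη
      rw [hcsub]
      simp only [hS, Finset.mem_filter] at hη
      exact Finset.mem_filter.mpr ⟨mem_K.mpr ⟨hτf, hτc⟩, hη.2⟩
    have hinter : ∀ η ∈ S, ∀ τ' ∈ ((X.K (c - 1 + 1)).filter (fun τ' => η ⊆ τ')).erase τ,
        τ ∩ τ' = η := by
      intro η hη τ' hτ'
      rw [hcsub] at hτ'
      simp only [hS, Finset.mem_filter] at hη
      simp only [Finset.mem_erase, Finset.mem_filter] at hτ'
      obtain ⟨hηK, hητ⟩ := hη
      obtain ⟨hne, ⟨hτ'K, hητ'⟩⟩ := hτ'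
      obtain ⟨hηf, hηc⟩ := mem_K.mp hηK
      obtain ⟨hτ'f, hτ'c⟩ := mem_K.mp hτ'K
      have hsub : η ⊆ τ ∩ τ' := Finset.subset_inter hητ hητ'
      have hlt : (τ ∩ τ').card < c := by
        have hle : (τ ∩ τ').card ≤ c := by
          have := Finset.card_le_card (Finset.inter_subset_left : τ ∩ τ' ⊆ τ)
          omega
        rcases lt_or_eq_of_le hle with h | h
        · exact h
        · exfalso
          have heq1 : τ ∩ τ' = τ :=
            Finset.eq_of_subset_of_card_le Finset.inter_subset_left (by omega)
          have hττ' : τ ⊆ τ' := by rw [← heq1]; exact Finset.inter_subset_right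
          exact hne (Finset.eq_of_subset_of_card_le hττ' (by omega)).symm
      exact (Finset.eq_of_subset_of_card_le hsub (by omega)).symm
    have expand : X.d (c - 1) (X.dStar (c - 1) φ) τ
        = ∑ η ∈ S, ((X.m τ / X.m η) * φ τ
            + ∑ τ' ∈ ((X.K (c - 1 + 1)).filter (fun τ' => η ⊆ τ')).erase τ,
                (X.m τ' / X.m η) * φ τ') := by
      unfold WSC.d WSC.dStar
      refine Finset.sum_congr rfl (fun η hη => ?_)
      rw [← Finset.add_sum_erase _ _ (hτT η hη)]
    have h2 : ∑ η ∈ S, ∑ τ' ∈ ((X.K (c - 1 + 1)).filter (fun τ' => η ⊆ τ')).erase τ,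
          (X.m τ' / X.m η) * φ τ'
        = ∑ τ' ∈ (X.K c).filter (fun τ' => τ' ≠ τ ∧ τ ∩ τ' ∈ X.K (c - 1)),
            (X.m τ' / X.m (τ ∩ τ')) * φ τ' := by
      rw [Finset.sum_sigma']
      refine Finset.sum_nbij' (fun p => p.2) (fun τ' => ⟨τ ∩ τ', τ'⟩) ?_ ?_ ?_ ?_ ?_
      · intro p hp
        obtain ⟨hη, hτ'⟩ := Finset.mem_sigma.mp hp
        have hint := hinter _ hη _ hτ'
        rw [hcsub] at hτ'
        simp only [Finset.mem_erase, Finset.mem_filter] at hτ'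
        refine Finset.mem_filter.mpr ⟨hτ'.2.1, hτ'.1, ?_⟩
        rw [hint]
        simp only [hS, Finset.mem_filter] at hη
        exact hη.1
      · intro τ' hτ'
        obtain ⟨hτ'K, hne, hiK⟩ := Finset.mem_filter.mp hτ'
        refine Finset.mem_sigma.mpr ⟨?_, ?_⟩
        · exact Finset.mem_filter.mpr ⟨hiK, Finset.inter_subset_left⟩
        · rw [hcsub]
          exact Finset.mem_erase.mpr ⟨hne,
            Finset.mem_filter.mpr ⟨hτ'K, Finset.inter_subset_right⟩⟩
      · intro p hp
        obtain ⟨hη, hτ'⟩ := Finset.mem_sigma.mp hp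
        exact Sigma.ext (hinter _ hη _ hτ') HEq.rfl
      · intro τ' hτ'; rfl
      · intro p hp
        obtain ⟨hη, hτ'⟩ := Finset.mem_sigma.mp hp
        rw [hinter _ hη _ hτ']
    rw [expand, Finset.sum_add_distrib, h2]
    unfold WSC.Mdown
    rw [mul_add]
    congr 1
    · rw [← Finset.sum_mul, ← mul_assoc, Finset.mul_sum]
      congr 1
      refine Finset.sum_congr rfl (fun η hη => ?_)
      have hηf : η ∈ X.faces := (mem_K.mp (Finset.mem_filter.mp hη).1).1
      have hmη : X.m η ≠ 0 := ne_of_gt (hpos hηf)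
      field_simp
    · rw [Finset.mul_sum]
      refine Finset.sum_congr rfl (fun τ' hτ' => ?_)
      have hif : τ ∩ τ' ∈ X.faces := (mem_K.mp (Finset.mem_filter.mp hτ').2.2).1
      have hmi : X.m (τ ∩ τ') ≠ 0 := ne_of_gt (hpos hif)
      field_simp
end
end

section
/- For 0 ≤ k ≤ n−1 and φ ∈ C^k(X,ℝ), if there is ε > 0 such that ‖dφ‖² ≤ ε ‖φ‖², then ‖M⁺_k φ‖² ≤ (ε/(k+2)) ‖φ‖². -/
/-!
Framework: a pure `n`-dimensional finite weighted simplicial complex, following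
Kaufman–Oppenheim, "High Order Random Walks: Beyond Spectral Gap".

A complex is given by its finset of faces (finsets of a vertex type `V`) together with
a weight function `m`.  We index levels by **cardinality**: `X.K c` is the set of faces
with `c` elements, i.e. the set `X(k)` of `k`-dimensional faces for `k = c - 1`
(so `X(-1) = X.K 0`, and a pure `n`-dimensional complex has top level `X.K (n+1)`).
-/

noncomputable section

open Finset

namespace WSC

variable {V : Type*} [DecidableEq V]

lemma mem_K (X : WSC V) {c : ℕ} {σ : Finset V} :
    σ ∈ X.K c ↔ σ ∈ X.faces ∧ σ.card = c := Finset.mem_filter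

lemma sum_m_filter (X : WSC V) (n : ℕ) (hX : X.IsWSC n) {c : ℕ} {τ : Finset V}
    (hτf : τ ∈ X.faces) (hτc : τ.card = c) (hcn : c ≤ n) :
    ∑ σ ∈ (X.K (c+1)).filter (fun σ => τ ⊆ σ), X.m σ = X.m τ := by
  have hfe : (X.K (c+1)).filter (fun σ => τ ⊆ σ)
      = X.faces.filter (fun σ => τ ⊆ σ ∧ σ.card = τ.card + 1) := by
    ext σ
    simp only [K, Finset.mem_filter, Finset.filter_filter, hτc]
    tauto
  rw [hfe, ← hX.2.2.2.2.2 hτf (le_of_eq_of_le hτc hcn)]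

lemma dStar_d_eq (X : WSC V) (n : ℕ) (hX : X.IsWSC n) (k : ℕ) (hk : k < n)
    (φ : Finset V → ℝ) {τ : Finset V} (hτ : τ ∈ X.K (k+1)) :
    X.dStar (k+1) (X.d (k+1) φ) τ = ((k:ℝ) + 2) * X.Mup (k+1) φ τ := by
  rw [K, Finset.mem_filter] at hτ
  obtain ⟨hτf, hτc⟩ := hτ
  have hmτ : 0 < X.m τ := hX.2.2.2.2.1 hτf
  have hk2 : ((k:ℝ) + 2) ≠ 0 := by positivity
  set S := (X.K (k+1+1)).filter (fun σ => τ ⊆ σ) with hS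
  set U := (X.K (k+1)).filter (fun τ' => τ ∪ τ' ∈ X.K (k+1+1)) with hU
  have key : ∀ σ ∈ S, ∀ τ' ∈ ((X.K (k+1)).filter (fun τ' => τ' ⊆ σ)).erase τ,
      τ ∪ τ' = σ := by
    intro σ hσ τ' hτ'
    rw [hS, Finset.mem_filter, K, Finset.mem_filter] at hσ
    rw [Finset.mem_erase, Finset.mem_filter, K, Finset.mem_filter] at hτ'
    obtain ⟨⟨hσf, hσc⟩, hτσ⟩ := hσ
    obtain ⟨hne, ⟨hτ'f, hτ'c⟩, hτ'σ⟩ := hτ'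
    have hsub : τ ∪ τ' ⊆ σ := Finset.union_subset hτσ hτ'σ
    have hss : τ' ⊂ τ ∪ τ' := by
      refine Finset.ssubset_iff_subset_ne.2 ⟨Finset.subset_union_right, ?_⟩
      intro hcontra
      apply hne
      have hτsub : τ ⊆ τ' := hcontra ▸ Finset.subset_union_left
      exact (Finset.eq_of_subset_of_card_le hτsub (by rw [hτ'c, hτc])).symm
    have hcard : k + 2 ≤ (τ ∪ τ').card := by
      have := Finset.card_lt_card hss
      omega
    exact Finset.eq_of_subset_of_card_le hsub (by omega)
  -- expand dStar, split inner sum at τ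
  show (∑ σ ∈ S, (X.m σ / X.m τ) *
      (∑ τ' ∈ (X.K (k+1)).filter (fun τ' => τ' ⊆ σ), φ τ')) = _
  have hsplit : ∀ σ ∈ S,
      (X.m σ / X.m τ) * (∑ τ' ∈ (X.K (k+1)).filter (fun τ' => τ' ⊆ σ), φ τ')
      = (X.m σ / X.m τ) * φ τ +
        ∑ τ' ∈ ((X.K (k+1)).filter (fun τ' => τ' ⊆ σ)).erase τ,
          (X.m σ / X.m τ) * φ τ' := by
    intro σ hσ
    have hτmem : τ ∈ (X.K (k+1)).filter (fun τ' => τ' ⊆ σ) := by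
      rw [hS, Finset.mem_filter] at hσ
      exact Finset.mem_filter.2 ⟨Finset.mem_filter.2 ⟨hτf, hτc⟩, hσ.2⟩
    rw [← Finset.add_sum_erase _ _ hτmem, mul_add, Finset.mul_sum]
  rw [Finset.sum_congr rfl hsplit, Finset.sum_add_distrib]
  -- first sum
  have h1 : (∑ σ ∈ S, (X.m σ / X.m τ) * φ τ) = φ τ := by
    rw [← Finset.sum_mul, ← Finset.sum_div, sum_m_filter X n hX hτf hτc (by omega),
      div_self (ne_of_gt hmτ), one_mul]
  -- second sum: reindex
  have h2 : (∑ σ ∈ S, ∑ τ' ∈ ((X.K (k+1)).filter (fun τ' => τ' ⊆ σ)).erase τ,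
      (X.m σ / X.m τ) * φ τ')
      = ∑ τ' ∈ U, (X.m (τ ∪ τ') / X.m τ) * φ τ' := by
    rw [Finset.sum_sigma']
    refine Finset.sum_nbij' (fun p => p.2) (fun τ' => ⟨τ ∪ τ', τ'⟩) ?_ ?_ ?_ ?_ ?_
    · rintro ⟨σ, τ'⟩ hp
      rw [Finset.mem_sigma] at hp
      obtain ⟨hpσ, hpτ'⟩ := hp
      have heq := key σ hpσ τ' hpτ'
      rw [hU, Finset.mem_filter]
      rw [Finset.mem_erase, Finset.mem_filter] at hpτ'
      refine ⟨hpτ'.2.1, ?_⟩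
      rw [heq]
      rw [hS, Finset.mem_filter] at hpσ
      exact hpσ.1
    · intro τ' hτ'
      rw [hU, Finset.mem_filter] at hτ'
      obtain ⟨hτ'K, hunion⟩ := hτ'
      rw [Finset.mem_sigma]
      constructor
      · rw [hS, Finset.mem_filter]
        exact ⟨hunion, Finset.subset_union_left⟩
      · rw [Finset.mem_erase, Finset.mem_filter]
        refine ⟨?_, hτ'K, Finset.subset_union_right⟩
        intro hcontra
        dsimp only at hcontra
        have hc1 := (X.mem_K.1 hunion).2
        rw [hcontra, Finset.union_self] at hc1
        omega
    · rintro ⟨σ, τ'⟩ hp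
      rw [Finset.mem_sigma] at hp
      have := key σ hp.1 τ' hp.2
      simp [this]
    · intro τ' hτ'; rfl
    · rintro ⟨σ, τ'⟩ hp
      rw [Finset.mem_sigma] at hp
      have := key σ hp.1 τ' hp.2
      simp [this]
  rw [h1, h2, Mup]
  push_cast
  rw [mul_add, Finset.mul_sum]
  congr 1
  · field_simp
    ring
  · refine Finset.sum_congr rfl fun τ' _ => ?_
    field_simp
    ring

lemma dStar_normSq_le (X : WSC V) (n : ℕ) (hX : X.IsWSC n) (c : ℕ) (hc : c ≤ n)
    (ψ : Finset V → ℝ) :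
    X.normSq c (X.dStar c ψ) ≤ ((c:ℝ) + 1) * X.normSq (c+1) ψ := by
  have step1 : X.normSq c (X.dStar c ψ) ≤
      ∑ τ ∈ X.K c, ∑ σ ∈ (X.K (c+1)).filter (fun σ => τ ⊆ σ), X.m σ * (ψ σ * ψ σ) := by
    unfold normSq inn dStar
    refine Finset.sum_le_sum fun τ hτ => ?_
    obtain ⟨hτf, hτc⟩ := X.mem_K.1 hτ
    have hmτ : 0 < X.m τ := hX.2.2.2.2.1 hτf
    set F := (X.K (c+1)).filter (fun σ => τ ⊆ σ) with hF
    have hrw : (∑ σ ∈ F, X.m σ / X.m τ * ψ σ) = (∑ σ ∈ F, X.m σ * ψ σ) / X.m τ := by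
      rw [Finset.sum_div]
      exact Finset.sum_congr rfl fun σ _ => by ring
    rw [hrw]
    have hmpos : ∀ σ ∈ F, 0 ≤ X.m σ := fun σ hσ =>
      le_of_lt (hX.2.2.2.2.1 (X.mem_K.1 (Finset.mem_filter.1 hσ).1).1)
    have hcs : (∑ σ ∈ F, X.m σ * ψ σ)^2
        ≤ (∑ σ ∈ F, X.m σ) * ∑ σ ∈ F, X.m σ * (ψ σ * ψ σ) := by
      have h := Finset.sum_mul_sq_le_sq_mul_sq F (fun σ => Real.sqrt (X.m σ))
        (fun σ => Real.sqrt (X.m σ) * ψ σ)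
      have e1 : (∑ σ ∈ F, Real.sqrt (X.m σ) * (Real.sqrt (X.m σ) * ψ σ))
          = ∑ σ ∈ F, X.m σ * ψ σ :=
        Finset.sum_congr rfl fun σ hσ => by
          rw [← mul_assoc, Real.mul_self_sqrt (hmpos σ hσ)]
      have e2 : (∑ σ ∈ F, Real.sqrt (X.m σ) ^ 2) = ∑ σ ∈ F, X.m σ :=
        Finset.sum_congr rfl fun σ hσ => Real.sq_sqrt (hmpos σ hσ)
      have e3 : (∑ σ ∈ F, (Real.sqrt (X.m σ) * ψ σ) ^ 2)
          = ∑ σ ∈ F, X.m σ * (ψ σ * ψ σ) :=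
        Finset.sum_congr rfl fun σ hσ => by
          rw [mul_pow, Real.sq_sqrt (hmpos σ hσ)]; ring
      rw [e1, e2, e3] at h
      exact h
    rw [sum_m_filter X n hX hτf hτc hc] at hcs
    have : X.m τ * ((∑ σ ∈ F, X.m σ * ψ σ) / X.m τ * ((∑ σ ∈ F, X.m σ * ψ σ) / X.m τ))
        = (∑ σ ∈ F, X.m σ * ψ σ)^2 / X.m τ := by
      field_simp
    rw [this, div_le_iff₀ hmτ, mul_comm (∑ σ ∈ F, X.m σ * (ψ σ * ψ σ)) (X.m τ)]
    exact hcs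
  refine le_trans step1 ?_
  have swap : (∑ τ ∈ X.K c, ∑ σ ∈ (X.K (c+1)).filter (fun σ => τ ⊆ σ),
        X.m σ * (ψ σ * ψ σ))
      = ∑ σ ∈ X.K (c+1), ∑ τ ∈ (X.K c).filter (fun τ => τ ⊆ σ),
        X.m σ * (ψ σ * ψ σ) := by
    simp only [Finset.sum_filter]
    exact Finset.sum_comm
  rw [swap]
  have count : ∀ σ ∈ X.K (c+1),
      (∑ τ ∈ (X.K c).filter (fun τ => τ ⊆ σ), X.m σ * (ψ σ * ψ σ))
      = ((c:ℝ) + 1) * (X.m σ * (ψ σ * ψ σ)) := by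
    intro σ hσ
    obtain ⟨hσf, hσc⟩ := X.mem_K.1 hσ
    have hfeq : (X.K c).filter (fun τ => τ ⊆ σ) = σ.powersetCard c := by
      ext τ
      simp only [Finset.mem_filter, mem_K, Finset.mem_powersetCard]
      exact ⟨fun h => ⟨h.2, h.1.2⟩, fun h => ⟨⟨hX.2.1 hσf h.1, h.2⟩, h.1⟩⟩
    rw [hfeq, Finset.sum_const, Finset.card_powersetCard, hσc,
      Nat.choose_succ_self_right, nsmul_eq_mul]
    push_cast
    ring
  rw [Finset.sum_congr rfl count, ← Finset.mul_sum]
  rfl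


end WSC

open WSC
/-- For `0 ≤ k ≤ n-1` and `φ ∈ C^k(X,ℝ)`, if there is `ε > 0` with
`‖dφ‖² ≤ ε ‖φ‖²`, then `‖M⁺_k φ‖² ≤ (ε/(k+2)) ‖φ‖²`.
(Cardinality level `k + 1`.) -/
theorem Mup_normSq_le_of_d_normSq_le {V : Type*} [DecidableEq V] (X : WSC V) (n : ℕ)
    (hX : X.IsWSC n) (k : ℕ) (hk : k < n) (φ : Finset V → ℝ) (ε : ℝ) (hε : 0 < ε)
    (h : X.normSq (k + 2) (X.d (k + 1) φ) ≤ ε * X.normSq (k + 1) φ) :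
    X.normSq (k + 1) (X.Mup (k + 1) φ) ≤ (ε / ((k : ℝ) + 2)) * X.normSq (k + 1) φ := by
  have hpos : (0:ℝ) < (k:ℝ) + 2 := by positivity
  have key : X.normSq (k+1) (X.Mup (k+1) φ)
      = (1/((k:ℝ)+2))^2 * X.normSq (k+1) (X.dStar (k+1) (X.d (k+1) φ)) := by
    unfold WSC.normSq WSC.inn
    rw [Finset.mul_sum]
    refine Finset.sum_congr rfl fun τ hτ => ?_
    rw [WSC.dStar_d_eq X n hX k hk φ hτ]
    field_simp
  rw [key]
  have hB := WSC.dStar_normSq_le X n hX (k+1) (by omega) (X.d (k+1) φ)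
  push_cast at hB
  have hB2 : X.normSq (k+1) (X.dStar (k+1) (X.d (k+1) φ))
      ≤ ((k:ℝ)+2) * (ε * X.normSq (k+1) φ) := by
    refine le_trans hB ?_
    have : X.normSq (k+1+1) (X.d (k+1) φ) = X.normSq (k+2) (X.d (k+1) φ) := rfl
    rw [this]
    nlinarith
  calc (1/((k:ℝ)+2))^2 * X.normSq (k+1) (X.dStar (k+1) (X.d (k+1) φ))
      ≤ (1/((k:ℝ)+2))^2 * (((k:ℝ)+2) * (ε * X.normSq (k+1) φ)) := by
        apply mul_le_mul_of_nonneg_left hB2 (by positivity)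
    _ = (ε / ((k : ℝ) + 2)) * X.normSq (k + 1) φ := by
        field_simp
end
end

section
/- For every −1 ≤ k < l ≤ n and every φ ∈ C^l(X,ℝ), binom(l+1, k+1) · ‖φ‖² = Σ_{τ ∈ X(k)} ‖φ_τ‖², where ‖φ_τ‖ is the norm of the localization φ_τ in C^{l−k−1}(X_τ,ℝ) with respect to the induced weight m_τ. -/
/-!
Framework: a pure `n`-dimensional finite weighted simplicial complex, following
Kaufman–Oppenheim, "High Order Random Walks: Beyond Spectral Gap".

A complex is given by its finset of faces (finsets of a vertex type `V`) together with
a weight function `m`.  We index levels by **cardinality**: `X.K c` is the set of faces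
with `c` elements, i.e. the set `X(k)` of `k`-dimensional faces for `k = c - 1`
(so `X(-1) = X.K 0`, and a pure `n`-dimensional complex has top level `X.K (n+1)`).
-/

noncomputable section

open Finset

open WSC
/-- For every `-1 ≤ k < l ≤ n` and every `φ ∈ C^l(X,ℝ)`,
`binom(l+1, k+1) ‖φ‖² = Σ_{τ ∈ X(k)} ‖φ_τ‖²`, where `φ_τ ∈ C^{l-k-1}(X_τ,ℝ)` is the
localization, with the norm induced by the weight `m_τ` of the link.
(Cardinality levels `c = k + 1 < c' = l + 1`; `φ_τ` lives at link level `c' - c`.) -/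
theorem localization_normSq {V : Type*} [DecidableEq V] (X : WSC V) (n : ℕ)
    (hX : X.IsWSC n) (c c' : ℕ) (hcc' : c < c') (hc' : c' ≤ n + 1) (φ : Finset V → ℝ) :
    (Nat.choose c' c : ℝ) * X.normSq c' φ =
      ∑ τ ∈ X.K c, (X.link τ).normSq (c' - c) (localize φ τ) := by
  obtain ⟨-, hdown, -, -, -, -⟩ := hX
  have step1 : ∀ τ ∈ X.K c,
      (X.link τ).normSq (c' - c) (localize φ τ) =
        ∑ σ ∈ (X.K c').filter (fun σ => τ ⊆ σ), X.m σ * (φ σ * φ σ) := by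
    intro τ hτ
    simp only [WSC.K, mem_filter] at hτ
    obtain ⟨hτf, hτc⟩ := hτ
    unfold WSC.normSq WSC.inn WSC.link WSC.localize WSC.K
    refine Finset.sum_bij' (fun η _ => τ ∪ η) (fun σ _ => σ \ τ) ?_ ?_ ?_ ?_ ?_
    · intro η hη
      simp only [mem_filter] at hη ⊢
      obtain ⟨⟨hηf, hηd, hηu⟩, hηc⟩ := hη
      refine ⟨⟨hηu, ?_⟩, Finset.subset_union_left⟩
      rw [Finset.card_union_of_disjoint (by
        rw [Finset.disjoint_left]; intro a ha hb
        exact Finset.notMem_empty a (hηd ▸ Finset.mem_inter.2 ⟨hb, ha⟩)), hτc, hηc]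
      omega
    · intro σ hσ
      simp only [mem_filter] at hσ ⊢
      obtain ⟨⟨hσf, hσc⟩, hτσ⟩ := hσ
      refine ⟨⟨hdown hσf (Finset.sdiff_subset), Finset.sdiff_inter_self τ σ, ?_⟩, ?_⟩
      · rwa [Finset.union_sdiff_self_eq_union, Finset.union_eq_right.2 hτσ]
      · rw [Finset.card_sdiff_of_subset hτσ, hσc, hτc]
    · intro η hη
      simp only [mem_filter] at hη
      obtain ⟨⟨hηf, hηd, hηu⟩, hηc⟩ := hη
      show (τ ∪ η) \ τ = η
      rw [Finset.union_sdiff_left]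
      exact Finset.sdiff_eq_self_of_disjoint (by
        rw [Finset.disjoint_left]; intro a ha hb
        exact Finset.notMem_empty a (hηd ▸ Finset.mem_inter.2 ⟨ha, hb⟩))
    · intro σ hσ
      simp only [mem_filter] at hσ
      show τ ∪ σ \ τ = σ
      exact Finset.union_sdiff_of_subset hσ.2
    · intro η hη; rfl
  rw [Finset.sum_congr rfl step1]
  rw [Finset.sum_comm' (s := X.K c) (t := fun τ => (X.K c').filter (fun σ => τ ⊆ σ))
    (t' := X.K c') (s' := fun σ => (X.K c).filter (fun τ => τ ⊆ σ))
    (by intro τ σ; simp only [mem_filter]; tauto)]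
  unfold WSC.normSq WSC.inn
  rw [Finset.mul_sum]
  refine Finset.sum_congr rfl fun σ hσ => ?_
  rw [Finset.sum_const, nsmul_eq_mul]
  congr 1
  simp only [WSC.K, mem_filter] at hσ
  have : (X.K c).filter (fun τ => τ ⊆ σ) = σ.powersetCard c := by
    ext τ
    simp only [mem_filter, Finset.mem_powersetCard, WSC.K]
    constructor
    · rintro ⟨⟨-, hc⟩, hs⟩; exact ⟨hs, hc⟩
    · rintro ⟨hs, hc⟩; exact ⟨⟨hdown hσ.1 hs, hc⟩, hs⟩
  rw [this, Finset.card_powersetCard, hσ.2]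
end
end

section
/- For every −1 ≤ k < l ≤ n and every φ ∈ C^l(X,ℝ), binom(l, k+1) · ‖d*φ‖² = Σ_{τ ∈ X(k)} ‖d*_τ φ_τ‖², where d*_τ is the adjoint of the signless differential on cochains of the link X_τ. -/
/-!
Framework: a pure `n`-dimensional finite weighted simplicial complex, following
Kaufman–Oppenheim, "High Order Random Walks: Beyond Spectral Gap".

A complex is given by its finset of faces (finsets of a vertex type `V`) together with
a weight function `m`.  We index levels by **cardinality**: `X.K c` is the set of faces
with `c` elements, i.e. the set `X(k)` of `k`-dimensional faces for `k = c - 1`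
(so `X(-1) = X.K 0`, and a pure `n`-dimensional complex has top level `X.K (n+1)`).
-/

noncomputable section

open Finset

open WSC

/-- Localizing `d*` to a link: `(d*_τ φ_τ)(η) = (d* φ)(τ ∪ η)`. -/
private lemma dStar_localize_aux {V : Type*} [DecidableEq V] (X : WSC V) (n : ℕ)
    (hX : X.IsWSC n) (c c' : ℕ) (hcc' : c < c') (φ : Finset V → ℝ)
    {τ : Finset V} (hτ : τ ∈ X.K c) {η : Finset V} (hη : η ∈ (X.link τ).K (c' - c - 1)) :
    (X.link τ).dStar (c' - c - 1) (localize φ τ) η = X.dStar (c' - 1) φ (τ ∪ η) := by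
  obtain ⟨h0, hdown, hub, hpure, hpos, hw⟩ := hX
  simp only [WSC.K, WSC.link, Finset.mem_filter] at hτ hη
  obtain ⟨hτf, hτc⟩ := hτ
  obtain ⟨⟨hηf, hηinter, hτηf⟩, hηc⟩ := hη
  have hdisjτη : Disjoint η τ := Finset.disjoint_iff_inter_eq_empty.mpr hηinter
  simp only [WSC.dStar, WSC.link, WSC.localize, WSC.K]
  have h1 : c' - c - 1 + 1 = c' - c := by omega
  have h2 : c' - 1 + 1 = c' := by omega
  rw [h1, h2]
  refine Finset.sum_bij' (fun σ' _ => τ ∪ σ') (fun σ _ => σ \ τ) ?_ ?_ ?_ ?_ ?_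
  · intro σ' hσ'
    simp only [Finset.mem_filter] at hσ' ⊢
    obtain ⟨⟨⟨hσ'f, hσ'inter, hτσ'f⟩, hσ'c⟩, hησ'⟩ := hσ'
    have hdisj : Disjoint τ σ' :=
      (Finset.disjoint_iff_inter_eq_empty.mpr hσ'inter).symm
    refine ⟨⟨hτσ'f, ?_⟩, Finset.union_subset_union_right hησ'⟩
    rw [Finset.card_union_of_disjoint hdisj, hτc, hσ'c]; omega
  · intro σ hσ
    simp only [Finset.mem_filter] at hσ ⊢
    obtain ⟨⟨hσf, hσc⟩, hτησ⟩ := hσ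
    have hτσ : τ ⊆ σ := (Finset.union_subset_iff.mp hτησ).1
    have hησ : η ⊆ σ := (Finset.union_subset_iff.mp hτησ).2
    have hcup : τ ∪ σ \ τ = σ := Finset.union_sdiff_of_subset hτσ
    refine ⟨⟨⟨hdown hσf (Finset.sdiff_subset), ?_, (by rw [hcup]; exact hσf)⟩, ?_⟩, ?_⟩
    · rw [Finset.inter_comm]; exact Finset.inter_sdiff_self _ _
    · rw [Finset.card_sdiff_of_subset hτσ, hσc, hτc]
    · exact Finset.subset_sdiff.mpr ⟨hησ, hdisjτη⟩
  · intro σ' hσ'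
    simp only [Finset.mem_filter] at hσ'
    exact Finset.union_sdiff_cancel_left
      (Finset.disjoint_iff_inter_eq_empty.mpr hσ'.1.1.2.1).symm
  · intro σ hσ
    simp only [Finset.mem_filter] at hσ
    exact Finset.union_sdiff_of_subset (Finset.union_subset_iff.mp hσ.2).1
  · intro σ' hσ'; rfl

/-- For every `-1 ≤ k < l ≤ n` and every `φ ∈ C^l(X,ℝ)`,
`binom(l, k+1) ‖d*φ‖² = Σ_{τ ∈ X(k)} ‖d*_τ φ_τ‖²`, where `d*_τ` is the adjoint of the
signless differential on cochains of the link `X_τ`.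
(Cardinality levels `c = k + 1 < c' = l + 1`; `binom(l, k+1) = binom(c' - 1, c)`;
`d* φ` lives at level `c' - 1` and `d*_τ φ_τ` at link level `c' - c - 1`.) -/
theorem localization_dStar_normSq {V : Type*} [DecidableEq V] (X : WSC V) (n : ℕ)
    (hX : X.IsWSC n) (c c' : ℕ) (hcc' : c < c') (hc' : c' ≤ n + 1) (φ : Finset V → ℝ) :
    (Nat.choose (c' - 1) c : ℝ) * X.normSq (c' - 1) (X.dStar (c' - 1) φ) =
      ∑ τ ∈ X.K c,
        (X.link τ).normSq (c' - c - 1) ((X.link τ).dStar (c' - c - 1) (localize φ τ)) := by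
  obtain ⟨h0, hdown, hub, hpure, hpos, hw⟩ := id hX
  set F : Finset V → ℝ :=
    fun ρ => X.m ρ * (X.dStar (c' - 1) φ ρ * X.dStar (c' - 1) φ ρ) with hF
  have key : ∀ τ ∈ X.K c,
      (X.link τ).normSq (c' - c - 1) ((X.link τ).dStar (c' - c - 1) (localize φ τ)) =
        ∑ ρ ∈ (X.K (c' - 1)).filter (fun ρ => τ ⊆ ρ), F ρ := by
    intro τ hτ
    have hτ' := hτ
    simp only [WSC.K, Finset.mem_filter] at hτ'
    obtain ⟨hτf, hτc⟩ := hτ'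
    simp only [WSC.normSq, WSC.inn]
    refine Finset.sum_bij' (fun η _ => τ ∪ η) (fun ρ _ => ρ \ τ) ?_ ?_ ?_ ?_ ?_
    · intro η hη
      have hη' := hη
      simp only [WSC.K, WSC.link, Finset.mem_filter] at hη' ⊢
      obtain ⟨⟨hηf, hηinter, hτηf⟩, hηc⟩ := hη'
      have hdisj : Disjoint τ η :=
        (Finset.disjoint_iff_inter_eq_empty.mpr hηinter).symm
      refine ⟨⟨hτηf, ?_⟩, Finset.subset_union_left⟩
      rw [Finset.card_union_of_disjoint hdisj, hτc, hηc]; omega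
    · intro ρ hρ
      simp only [WSC.K, WSC.link, Finset.mem_filter] at hρ ⊢
      obtain ⟨⟨hρf, hρc⟩, hτρ⟩ := hρ
      have hcup : τ ∪ ρ \ τ = ρ := Finset.union_sdiff_of_subset hτρ
      refine ⟨⟨hdown hρf (Finset.sdiff_subset), ?_, (by rw [hcup]; exact hρf)⟩, ?_⟩
      · rw [Finset.inter_comm]; exact Finset.inter_sdiff_self _ _
      · rw [Finset.card_sdiff_of_subset hτρ, hρc, hτc]; omega
    · intro η hη
      simp only [WSC.K, WSC.link, Finset.mem_filter] at hη
      exact Finset.union_sdiff_cancel_left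
        (Finset.disjoint_iff_inter_eq_empty.mpr hη.1.2.1).symm
    · intro ρ hρ
      simp only [WSC.K, Finset.mem_filter] at hρ
      exact Finset.union_sdiff_of_subset hρ.2
    · intro η hη
      have hloc := dStar_localize_aux X n hX c c' hcc' φ hτ hη
      simp only [WSC.link] at hloc ⊢
      rw [hloc, hF]
  rw [Finset.sum_congr rfl key]
  symm
  have hcard : ∀ ρ ∈ X.K (c' - 1),
      ((X.K c).filter (fun τ => τ ⊆ ρ)).card = (c' - 1).choose c := by
    intro ρ hρ
    simp only [WSC.K, Finset.mem_filter] at hρ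
    have he : (X.K c).filter (fun τ => τ ⊆ ρ) = ρ.powersetCard c := by
      ext τ
      simp only [WSC.K, Finset.mem_filter, Finset.mem_powersetCard]
      exact ⟨fun h => ⟨h.2, h.1.2⟩, fun h => ⟨⟨hdown hρ.1 h.1, h.2⟩, h.1⟩⟩
    rw [he, Finset.card_powersetCard, hρ.2]
  calc ∑ τ ∈ X.K c, ∑ ρ ∈ (X.K (c' - 1)).filter (fun ρ => τ ⊆ ρ), F ρ
      = ∑ τ ∈ X.K c, ∑ ρ ∈ X.K (c' - 1), if τ ⊆ ρ then F ρ else 0 := by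
        simp only [Finset.sum_filter]
    _ = ∑ ρ ∈ X.K (c' - 1), ∑ τ ∈ X.K c, if τ ⊆ ρ then F ρ else 0 :=
        Finset.sum_comm
    _ = ∑ ρ ∈ X.K (c' - 1), ((X.K c).filter (fun τ => τ ⊆ ρ)).card • F ρ := by
        refine Finset.sum_congr rfl fun ρ _ => ?_
        rw [← Finset.sum_filter, Finset.sum_const]
    _ = ((c' - 1).choose c : ℝ) * X.normSq (c' - 1) (X.dStar (c' - 1) φ) := by
        rw [Finset.sum_congr rfl fun ρ hρ => by rw [hcard ρ hρ]]
        simp only [WSC.normSq, WSC.inn, Finset.mul_sum, nsmul_eq_mul, hF]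
end
end

section
/- For every 0 ≤ l < n and every φ ∈ C^l(X,ℝ), ‖dφ‖² = Σ_{τ ∈ X(l−1)} ( ‖d_τ φ_τ‖² − (l/(l+1)) ‖φ_τ‖² ), where d_τ is the signless differential on cochains of the link X_τ. -/
/-!
Framework: a pure `n`-dimensional finite weighted simplicial complex, following
Kaufman–Oppenheim, "High Order Random Walks: Beyond Spectral Gap".

A complex is given by its finset of faces (finsets of a vertex type `V`) together with
a weight function `m`.  We index levels by **cardinality**: `X.K c` is the set of faces
with `c` elements, i.e. the set `X(k)` of `k`-dimensional faces for `k = c - 1`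
(so `X(-1) = X.K 0`, and a pure `n`-dimensional complex has top level `X.K (n+1)`).
-/

noncomputable section

open Finset

open WSC
namespace WSCProofAux

open Finset

variable {V : Type*} [DecidableEq V]

lemma mem_K' {X : WSC V} {c : ℕ} {σ : Finset V} :
    σ ∈ X.K c ↔ σ ∈ X.faces ∧ σ.card = c := Finset.mem_filter

lemma mem_linkK {X : WSC V} {τ : Finset V} {c : ℕ} {η : Finset V} :
    η ∈ (X.link τ).K c ↔
      (η ∈ X.faces ∧ η ∩ τ = ∅ ∧ τ ∪ η ∈ X.faces ∧ η.card = c) := by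
  unfold WSC.K WSC.link
  simp only [Finset.mem_filter]
  tauto

lemma sum_filter_swap (A B : Finset (Finset V)) (f : Finset V → Finset V → ℝ) :
    ∑ σ ∈ A, ∑ τ ∈ B.filter (fun τ => τ ⊆ σ), f σ τ =
    ∑ τ ∈ B, ∑ σ ∈ A.filter (fun σ => τ ⊆ σ), f σ τ := by
  simp_rw [Finset.sum_filter]
  exact Finset.sum_comm

lemma inter_eq_empty_of_card_one {v v' : Finset V} (hv : v.card = 1)
    (hv' : v'.card = 1) (hne : v ≠ v') : v ∩ v' = ∅ := by
  obtain ⟨a, rfl⟩ := Finset.card_eq_one.mp hv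
  obtain ⟨b, rfl⟩ := Finset.card_eq_one.mp hv'
  have hab : a ≠ b := fun h => hne (by rw [h])
  exact Finset.singleton_inter_of_notMem (by simp [hab])

variable {X : WSC V} {n : ℕ}

lemma weight_sum
    (hwt : ∀ ⦃τ : Finset V⦄, τ ∈ X.faces → τ.card ≤ n →
      X.m τ = ∑ σ ∈ X.faces.filter (fun σ => τ ⊆ σ ∧ σ.card = τ.card + 1), X.m σ)
    {c : ℕ} {τ : Finset V} (hτ : τ ∈ X.faces) (hc : τ.card = c) (hcn : c ≤ n) :
    X.m τ = ∑ σ ∈ (X.K (c+1)).filter (fun σ => τ ⊆ σ), X.m σ := by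
  rw [hwt hτ (by rw [hc]; exact hcn)]
  congr 1
  ext σ
  simp only [Finset.mem_filter, mem_K', hc]
  tauto

lemma link_weight
    (hdc : ∀ ⦃σ τ : Finset V⦄, σ ∈ X.faces → τ ⊆ σ → τ ∈ X.faces)
    (hwt : ∀ ⦃τ : Finset V⦄, τ ∈ X.faces → τ.card ≤ n →
      X.m τ = ∑ σ ∈ X.faces.filter (fun σ => τ ⊆ σ ∧ σ.card = τ.card + 1), X.m σ)
    {l : ℕ} (hln : l + 1 ≤ n) {τ v : Finset V}
    (hτc : τ.card = l) (hv : v ∈ (X.link τ).K 1) :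
    X.m (τ ∪ v) = ∑ η ∈ ((X.link τ).K 2).filter (fun η => v ⊆ η), X.m (τ ∪ η) := by
  obtain ⟨hvf, hvτ, hτvf, hvc⟩ := mem_linkK.mp hv
  have hdisj : Disjoint τ v := by
    rw [Finset.disjoint_iff_inter_eq_empty, Finset.inter_comm]; exact hvτ
  have hτvc : (τ ∪ v).card = l + 1 := by
    rw [Finset.card_union_of_disjoint hdisj, hτc, hvc]
  rw [weight_sum hwt hτvf hτvc hln]
  refine Finset.sum_nbij' (fun σ => σ \ τ) (fun η => τ ∪ η) ?_ ?_ ?_ ?_ ?_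
  · rintro σ hσ
    rw [Finset.mem_filter, mem_K'] at hσ
    obtain ⟨⟨hσf, hσc⟩, hτvσ⟩ := hσ
    have hτσ : τ ⊆ σ := Finset.subset_union_left.trans hτvσ
    rw [Finset.mem_filter, mem_linkK]
    refine ⟨⟨hdc hσf Finset.sdiff_subset, Finset.sdiff_inter_self τ σ, ?_, ?_⟩, ?_⟩
    · rw [Finset.union_sdiff_of_subset hτσ]; exact hσf
    · rw [Finset.card_sdiff_of_subset hτσ, hσc, hτc]; omega
    · exact Finset.subset_sdiff.mpr ⟨Finset.subset_union_right.trans hτvσ, hdisj.symm⟩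
  · rintro η hη
    rw [Finset.mem_filter, mem_linkK] at hη
    obtain ⟨⟨hηf, hητ, hτηf, hηc⟩, hvη⟩ := hη
    have hdisjη : Disjoint τ η := by
      rw [Finset.disjoint_iff_inter_eq_empty, Finset.inter_comm]; exact hητ
    rw [Finset.mem_filter, mem_K']
    refine ⟨⟨hτηf, ?_⟩, Finset.union_subset_union_right hvη⟩
    rw [Finset.card_union_of_disjoint hdisjη, hτc, hηc]
  · rintro σ hσ
    rw [Finset.mem_filter, mem_K'] at hσ
    exact Finset.union_sdiff_of_subset (Finset.subset_union_left.trans hσ.2)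
  · rintro η hη
    rw [Finset.mem_filter, mem_linkK] at hη
    have hdisjη : Disjoint τ η := by
      rw [Finset.disjoint_iff_inter_eq_empty, Finset.inter_comm]; exact hη.1.2.1
    exact Finset.union_sdiff_cancel_left hdisjη
  · rintro σ hσ
    rw [Finset.mem_filter, mem_K'] at hσ
    rw [Finset.union_sdiff_of_subset (Finset.subset_union_left.trans hσ.2)]

lemma sum_over_links
    (hdc : ∀ ⦃σ τ : Finset V⦄, σ ∈ X.faces → τ ⊆ σ → τ ∈ X.faces)
    {l : ℕ} (g : Finset V → ℝ) :
    ∑ τ ∈ X.K l, ∑ v ∈ (X.link τ).K 1, g (τ ∪ v) =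
    ∑ ρ ∈ X.K (l+1), ((l : ℝ) + 1) * g ρ := by
  have hconst : ∀ ρ ∈ X.K (l+1), ((l:ℝ)+1) * g ρ = ∑ _v ∈ Finset.powersetCard 1 ρ, g ρ := by
    intro ρ hρ
    rw [Finset.sum_const, Finset.card_powersetCard, (mem_K'.mp hρ).2,
      Nat.choose_one_right, nsmul_eq_mul]
    push_cast
    ring
  rw [Finset.sum_congr rfl hconst,
    Finset.sum_sigma' (X.K l) (fun τ => (X.link τ).K 1) (fun τ v => g (τ ∪ v)),
    Finset.sum_sigma' (X.K (l+1)) (fun ρ => Finset.powersetCard 1 ρ) (fun ρ _v => g ρ)]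
  refine Finset.sum_nbij' (fun x => ⟨x.1 ∪ x.2, x.2⟩) (fun y => ⟨y.1 \ y.2, y.2⟩)
    ?_ ?_ ?_ ?_ ?_
  · rintro ⟨τ, v⟩ hx
    rw [Finset.mem_sigma, mem_K'] at hx
    obtain ⟨⟨hτf, hτc⟩, hv⟩ := hx
    obtain ⟨hvf, hvτ, hτvf, hvc⟩ := mem_linkK.mp hv
    have hdisj : Disjoint τ v := by
      rw [Finset.disjoint_iff_inter_eq_empty, Finset.inter_comm]; exact hvτ
    rw [Finset.mem_sigma, mem_K']
    refine ⟨⟨hτvf, ?_⟩, Finset.mem_powersetCard.mpr ⟨Finset.subset_union_right, hvc⟩⟩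
    rw [Finset.card_union_of_disjoint hdisj, hτc, hvc]
  · rintro ⟨ρ, v⟩ hy
    rw [Finset.mem_sigma, mem_K'] at hy
    obtain ⟨⟨hρf, hρc⟩, hv⟩ := hy
    obtain ⟨hvρ, hvc⟩ := Finset.mem_powersetCard.mp hv
    rw [Finset.mem_sigma, mem_K']
    refine ⟨⟨hdc hρf Finset.sdiff_subset, ?_⟩, mem_linkK.mpr ⟨hdc hρf hvρ,
      Finset.inter_sdiff_self v ρ, ?_, hvc⟩⟩
    · rw [Finset.card_sdiff_of_subset hvρ, hρc, hvc]; omega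
    · rw [Finset.sdiff_union_of_subset hvρ]; exact hρf
  · rintro ⟨τ, v⟩ hx
    rw [Finset.mem_sigma, mem_K'] at hx
    obtain ⟨hvτ, _, _⟩ := mem_linkK.mp hx.2
    have hdisj : Disjoint τ v := by
      rw [Finset.disjoint_iff_inter_eq_empty, Finset.inter_comm]
      exact (mem_linkK.mp hx.2).2.1
    show (⟨(τ ∪ v) \ v, v⟩ : Σ _ : Finset V, Finset V) = ⟨τ, v⟩
    rw [Finset.union_sdiff_cancel_right hdisj]
  · rintro ⟨ρ, v⟩ hy
    rw [Finset.mem_sigma] at hy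
    obtain ⟨hvρ, _⟩ := Finset.mem_powersetCard.mp hy.2
    show (⟨ρ \ v ∪ v, v⟩ : Σ _ : Finset V, Finset V) = ⟨ρ, v⟩
    rw [Finset.sdiff_union_of_subset hvρ]
  · rintro ⟨τ, v⟩ _
    rfl

end WSCProofAux

namespace WSCProofAux

open Finset

variable {V : Type*} [DecidableEq V] {X : WSC V}

lemma mem_link_faces {τ η : Finset V} :
    η ∈ (X.link τ).faces ↔ (η ∈ X.faces ∧ η ∩ τ = ∅ ∧ τ ∪ η ∈ X.faces) := by
  unfold WSC.link
  simp only [Finset.mem_filter]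

set_option linter.unusedSectionVars false in
lemma sigma3_sum (s : Finset (Finset V)) (t : Finset V → Finset (Finset V))
    (u : Finset V → Finset V → Finset (Finset V))
    (f : Finset V → Finset V → Finset V → ℝ) :
    ∑ x ∈ s.sigma (fun σ => (t σ).sigma (fun ρ => u σ ρ)), f x.1 x.2.1 x.2.2 =
    ∑ σ ∈ s, ∑ ρ ∈ t σ, ∑ ρ' ∈ u σ ρ, f σ ρ ρ' := by
  rw [Finset.sum_sigma]
  exact Finset.sum_congr rfl fun σ _ => by rw [Finset.sum_sigma]

set_option linter.unusedSectionVars false in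
lemma sigma4_sum (s : Finset (Finset V)) (t : Finset V → Finset (Finset V))
    (u : Finset V → Finset V → Finset (Finset V))
    (w : Finset V → Finset V → Finset V → Finset (Finset V))
    (f : Finset V → Finset V → Finset V → Finset V → ℝ) :
    ∑ x ∈ s.sigma (fun τ => (t τ).sigma (fun η => (u τ η).sigma (fun v => w τ η v))),
      f x.1 x.2.1 x.2.2.1 x.2.2.2 =
    ∑ τ ∈ s, ∑ η ∈ t τ, ∑ v ∈ u τ η, ∑ v' ∈ w τ η v, f τ η v v' := by
  rw [Finset.sum_sigma]
  exact Finset.sum_congr rfl fun τ _ => by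
    rw [Finset.sum_sigma]
    exact Finset.sum_congr rfl fun η _ => by rw [Finset.sum_sigma]

lemma cross_eq
    (hdc : ∀ ⦃σ τ : Finset V⦄, σ ∈ X.faces → τ ⊆ σ → τ ∈ X.faces)
    {l : ℕ} (φ : Finset V → ℝ) :
    ∑ σ ∈ X.K (l+2), ∑ ρ ∈ (X.K (l+1)).filter (fun ρ => ρ ⊆ σ),
      ∑ ρ' ∈ ((X.K (l+1)).filter (fun ρ => ρ ⊆ σ)).erase ρ, X.m σ * (φ ρ * φ ρ') =
    ∑ τ ∈ X.K l, ∑ η ∈ (X.link τ).K 2,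
      ∑ v ∈ ((X.link τ).K 1).filter (fun v => v ⊆ η),
        ∑ v' ∈ (((X.link τ).K 1).filter (fun v => v ⊆ η)).erase v,
          X.m (τ ∪ η) * (φ (τ ∪ v) * φ (τ ∪ v')) := by
  rw [← sigma3_sum (X.K (l+2)) (fun σ => (X.K (l+1)).filter (fun ρ => ρ ⊆ σ))
      (fun σ ρ => ((X.K (l+1)).filter (fun ρ => ρ ⊆ σ)).erase ρ)
      (fun σ ρ ρ' => X.m σ * (φ ρ * φ ρ')),
    ← sigma4_sum (X.K l) (fun τ => (X.link τ).K 2)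
      (fun τ η => ((X.link τ).K 1).filter (fun v => v ⊆ η))
      (fun τ η v => (((X.link τ).K 1).filter (fun v => v ⊆ η)).erase v)
      (fun τ η v v' => X.m (τ ∪ η) * (φ (τ ∪ v) * φ (τ ∪ v')))]
  refine Finset.sum_nbij'
    (fun x => ⟨x.2.1 ∩ x.2.2, x.1 \ (x.2.1 ∩ x.2.2),
      x.2.1 \ (x.2.1 ∩ x.2.2), x.2.2 \ (x.2.1 ∩ x.2.2)⟩)
    (fun y => ⟨y.1 ∪ y.2.1, y.1 ∪ y.2.2.1, y.1 ∪ y.2.2.2⟩) ?_ ?_ ?_ ?_ ?_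
  · rintro ⟨σ, ρ, ρ'⟩ hx
    simp only [Finset.mem_sigma, Finset.mem_filter, Finset.mem_erase, mem_K',
      mem_link_faces] at hx ⊢
    obtain ⟨⟨hσf, hσc⟩, ⟨⟨hρf, hρc⟩, hρσ⟩, hne, ⟨hρ'f, hρ'c⟩, hρ'σ⟩ := hx
    have hρuρ' : ρ ∪ ρ' = σ := by
      refine Finset.eq_of_subset_of_card_le (Finset.union_subset hρσ hρ'σ) ?_
      have hss : ρ ⊂ ρ ∪ ρ' := by
        refine Finset.ssubset_iff_subset_ne.mpr ⟨Finset.subset_union_left, fun h => hne ?_⟩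
        have hρ'ρ : ρ' ⊆ ρ := by rw [h]; exact Finset.subset_union_right
        exact Finset.eq_of_subset_of_card_le hρ'ρ (by omega)
      have := Finset.card_lt_card hss
      omega
    have hτc : (ρ ∩ ρ').card = l := by
      have := Finset.card_union_add_card_inter ρ ρ'
      rw [hρuρ', hσc, hρc, hρ'c] at this
      omega
    have hτρ : ρ ∩ ρ' ⊆ ρ := Finset.inter_subset_left
    have hτρ' : ρ ∩ ρ' ⊆ ρ' := Finset.inter_subset_right
    have hτσ : ρ ∩ ρ' ⊆ σ := hτρ.trans hρσ
    have hvη : ρ \ (ρ ∩ ρ') ⊆ σ \ (ρ ∩ ρ') := Finset.sdiff_subset_sdiff hρσ (Finset.Subset.refl _)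
    have hv'η : ρ' \ (ρ ∩ ρ') ⊆ σ \ (ρ ∩ ρ') :=
      Finset.sdiff_subset_sdiff hρ'σ (Finset.Subset.refl _)
    have hne' : ρ' \ (ρ ∩ ρ') ≠ ρ \ (ρ ∩ ρ') := by
      intro h
      apply hne
      have := congrArg (fun s => (ρ ∩ ρ') ∪ s) h
      simpa only [Finset.union_sdiff_of_subset hτρ, Finset.union_sdiff_of_subset hτρ'] using this
    refine ⟨⟨hdc hσf hτσ, hτc⟩,
      ⟨⟨hdc hσf Finset.sdiff_subset, Finset.sdiff_inter_self _ _, ?_⟩, ?_⟩,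
      ⟨⟨⟨hdc hρf Finset.sdiff_subset, Finset.sdiff_inter_self _ _, ?_⟩, ?_⟩, hvη⟩,
      hne', ⟨⟨hdc hρ'f Finset.sdiff_subset, Finset.sdiff_inter_self _ _, ?_⟩, ?_⟩, hv'η⟩
    · rw [Finset.union_sdiff_of_subset hτσ]; exact hσf
    · rw [Finset.card_sdiff_of_subset hτσ, hσc, hτc]; omega
    · rw [Finset.union_sdiff_of_subset hτρ]; exact hρf
    · rw [Finset.card_sdiff_of_subset hτρ, hρc, hτc]; omega
    · rw [Finset.union_sdiff_of_subset hτρ']; exact hρ'f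
    · rw [Finset.card_sdiff_of_subset hτρ', hρ'c, hτc]; omega
  · rintro ⟨τ, η, v, v'⟩ hy
    simp only [Finset.mem_sigma, Finset.mem_filter, Finset.mem_erase, mem_K',
      mem_link_faces] at hy ⊢
    obtain ⟨⟨hτf, hτc⟩, ⟨⟨hηf, hητ, hτηf⟩, hηc⟩, ⟨⟨⟨hvf, hvτ, hτvf⟩, hvc⟩, hvη⟩,
      hne, ⟨⟨hv'f, hv'τ, hτv'f⟩, hv'c⟩, hv'η⟩ := hy
    have hdη : Disjoint τ η := by
      rw [Finset.disjoint_iff_inter_eq_empty, Finset.inter_comm]; exact hητ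
    have hdv : Disjoint τ v := by
      rw [Finset.disjoint_iff_inter_eq_empty, Finset.inter_comm]; exact hvτ
    have hdv' : Disjoint τ v' := by
      rw [Finset.disjoint_iff_inter_eq_empty, Finset.inter_comm]; exact hv'τ
    have hne' : τ ∪ v' ≠ τ ∪ v := by
      intro h
      apply hne
      have := congrArg (fun s => s \ τ) h
      simpa only [Finset.union_sdiff_cancel_left hdv, Finset.union_sdiff_cancel_left hdv']
        using this
    refine ⟨⟨hτηf, ?_⟩, ⟨⟨hτvf, ?_⟩, Finset.union_subset_union_right hvη⟩,
      hne', ⟨hτv'f, ?_⟩, Finset.union_subset_union_right hv'η⟩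
    · rw [Finset.card_union_of_disjoint hdη, hτc, hηc]
    · rw [Finset.card_union_of_disjoint hdv, hτc, hvc]
    · rw [Finset.card_union_of_disjoint hdv', hτc, hv'c]
  · rintro ⟨σ, ρ, ρ'⟩ hx
    simp only [Finset.mem_sigma, Finset.mem_filter, Finset.mem_erase, mem_K'] at hx
    obtain ⟨⟨hσf, hσc⟩, ⟨⟨hρf, hρc⟩, hρσ⟩, hne, ⟨hρ'f, hρ'c⟩, hρ'σ⟩ := hx
    have hτρ : ρ ∩ ρ' ⊆ ρ := Finset.inter_subset_left
    have hτρ' : ρ ∩ ρ' ⊆ ρ' := Finset.inter_subset_right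
    have hτσ : ρ ∩ ρ' ⊆ σ := hτρ.trans hρσ
    dsimp only
    rw [Finset.union_sdiff_of_subset hτσ, Finset.union_sdiff_of_subset hτρ,
      Finset.union_sdiff_of_subset hτρ']
  · rintro ⟨τ, η, v, v'⟩ hy
    simp only [Finset.mem_sigma, Finset.mem_filter, Finset.mem_erase, mem_K',
      mem_link_faces] at hy
    obtain ⟨⟨hτf, hτc⟩, ⟨⟨hηf, hητ, hτηf⟩, hηc⟩, ⟨⟨⟨hvf, hvτ, hτvf⟩, hvc⟩, hvη⟩,
      hne, ⟨⟨hv'f, hv'τ, hτv'f⟩, hv'c⟩, hv'η⟩ := hy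
    have hdη : Disjoint τ η := by
      rw [Finset.disjoint_iff_inter_eq_empty, Finset.inter_comm]; exact hητ
    have hdv : Disjoint τ v := by
      rw [Finset.disjoint_iff_inter_eq_empty, Finset.inter_comm]; exact hvτ
    have hdv' : Disjoint τ v' := by
      rw [Finset.disjoint_iff_inter_eq_empty, Finset.inter_comm]; exact hv'τ
    have hvv' : v ∩ v' = ∅ := inter_eq_empty_of_card_one hvc hv'c (fun h => hne h.symm)
    have hτ0 : (τ ∪ v) ∩ (τ ∪ v') = τ := by
      rw [← Finset.union_inter_distrib_left, hvv', Finset.union_empty]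
    dsimp only
    rw [hτ0, Finset.union_sdiff_cancel_left hdη, Finset.union_sdiff_cancel_left hdv,
      Finset.union_sdiff_cancel_left hdv']
  · rintro ⟨σ, ρ, ρ'⟩ hx
    simp only [Finset.mem_sigma, Finset.mem_filter, Finset.mem_erase, mem_K'] at hx
    obtain ⟨⟨hσf, hσc⟩, ⟨⟨hρf, hρc⟩, hρσ⟩, hne, ⟨hρ'f, hρ'c⟩, hρ'σ⟩ := hx
    have hτρ : ρ ∩ ρ' ⊆ ρ := Finset.inter_subset_left
    have hτρ' : ρ ∩ ρ' ⊆ ρ' := Finset.inter_subset_right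
    have hτσ : ρ ∩ ρ' ⊆ σ := hτρ.trans hρσ
    dsimp only
    rw [Finset.union_sdiff_of_subset hτσ, Finset.union_sdiff_of_subset hτρ,
      Finset.union_sdiff_of_subset hτρ']

end WSCProofAux

namespace WSCProofAux

open Finset

variable {V : Type*} [DecidableEq V]

set_option linter.unusedSectionVars false in
lemma expand_sq (s : Finset (Finset V)) (c : ℝ) (f : Finset V → ℝ) :
    c * ((∑ ρ ∈ s, f ρ) * (∑ ρ ∈ s, f ρ)) =
    (∑ ρ ∈ s, c * (f ρ * f ρ)) + ∑ ρ ∈ s, ∑ ρ' ∈ s.erase ρ, c * (f ρ * f ρ') := by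
  have h1 : c * ((∑ ρ ∈ s, f ρ) * (∑ ρ ∈ s, f ρ)) = ∑ ρ ∈ s, ∑ ρ' ∈ s, c * (f ρ * f ρ') := by
    rw [Finset.sum_mul_sum, Finset.mul_sum]
    exact Finset.sum_congr rfl fun ρ _ => by rw [Finset.mul_sum]
  rw [h1, ← Finset.sum_add_distrib]
  exact Finset.sum_congr rfl fun ρ hρ =>
    (Finset.add_sum_erase s (fun ρ' => c * (f ρ * f ρ')) hρ).symm

end WSCProofAux

open WSCProofAux

/-- For every `0 ≤ l < n` and every `φ ∈ C^l(X,ℝ)`,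
`‖dφ‖² = Σ_{τ ∈ X(l-1)} ( ‖d_τ φ_τ‖² - (l/(l+1)) ‖φ_τ‖² )`, where `d_τ` is the signless
differential of the link `X_τ`. (Here `φ` lives at cardinality level `l + 1`, `τ` ranges
over `X(l-1)`, i.e. level `l`, and `φ_τ ∈ C⁰(X_τ,ℝ)` lives at link level `1`.) -/
theorem d_normSq_via_links {V : Type*} [DecidableEq V] (X : WSC V) (n : ℕ)
    (hX : X.IsWSC n) (l : ℕ) (hl : l < n) (φ : Finset V → ℝ) :
    X.normSq (l + 2) (X.d (l + 1) φ) =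
      ∑ τ ∈ X.K l,
        ((X.link τ).normSq 2 ((X.link τ).d 1 (localize φ τ)) -
          ((l : ℝ) / ((l : ℝ) + 1)) * (X.link τ).normSq 1 (localize φ τ)) := by
  obtain ⟨-, hdc, -, -, -, hwt⟩ := hX
  have hln : l + 1 ≤ n := hl
  set S : ℝ := ∑ ρ ∈ X.K (l+1), X.m ρ * (φ ρ * φ ρ) with hS
  set C : ℝ := ∑ σ ∈ X.K (l+2), ∑ ρ ∈ (X.K (l+1)).filter (fun ρ => ρ ⊆ σ),
      ∑ ρ' ∈ ((X.K (l+1)).filter (fun ρ => ρ ⊆ σ)).erase ρ, X.m σ * (φ ρ * φ ρ') with hC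
  -- LHS
  have hL : X.normSq (l + 2) (X.d (l + 1) φ) = S + C := by
    simp only [WSC.normSq, WSC.inn, WSC.d]
    have : ∀ σ ∈ X.K (l+2),
        X.m σ * ((∑ ρ ∈ (X.K (l+1)).filter (fun ρ => ρ ⊆ σ), φ ρ) *
          (∑ ρ ∈ (X.K (l+1)).filter (fun ρ => ρ ⊆ σ), φ ρ)) =
        (∑ ρ ∈ (X.K (l+1)).filter (fun ρ => ρ ⊆ σ), X.m σ * (φ ρ * φ ρ)) +
          ∑ ρ ∈ (X.K (l+1)).filter (fun ρ => ρ ⊆ σ),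
            ∑ ρ' ∈ ((X.K (l+1)).filter (fun ρ => ρ ⊆ σ)).erase ρ, X.m σ * (φ ρ * φ ρ') :=
      fun σ _ => expand_sq _ _ _
    rw [Finset.sum_congr rfl this, Finset.sum_add_distrib, hC, hS]
    congr 1
    rw [sum_filter_swap]
    refine Finset.sum_congr rfl fun ρ hρ => ?_
    rw [← Finset.sum_mul]
    congr 1
    exact (weight_sum hwt (mem_K'.mp hρ).1 (mem_K'.mp hρ).2 (by omega)).symm
  -- RHS pieces
  have hB : ∀ τ, (X.link τ).normSq 1 (WSC.localize φ τ) =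
      ∑ v ∈ (X.link τ).K 1, X.m (τ ∪ v) * (φ (τ ∪ v) * φ (τ ∪ v)) := by
    intro τ
    simp only [WSC.normSq, WSC.inn, WSC.link, WSC.localize]
  have hA : ∀ τ ∈ X.K l, (X.link τ).normSq 2 ((X.link τ).d 1 (WSC.localize φ τ)) =
      (∑ v ∈ (X.link τ).K 1, X.m (τ ∪ v) * (φ (τ ∪ v) * φ (τ ∪ v))) +
      ∑ η ∈ (X.link τ).K 2,
        ∑ v ∈ ((X.link τ).K 1).filter (fun v => v ⊆ η),
          ∑ v' ∈ (((X.link τ).K 1).filter (fun v => v ⊆ η)).erase v,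
            X.m (τ ∪ η) * (φ (τ ∪ v) * φ (τ ∪ v')) := by
    intro τ hτ
    have hτm := mem_K'.mp hτ
    have step1 : (X.link τ).normSq 2 ((X.link τ).d 1 (WSC.localize φ τ)) =
        ∑ η ∈ (X.link τ).K 2, X.m (τ ∪ η) *
          ((∑ v ∈ ((X.link τ).K 1).filter (fun v => v ⊆ η), φ (τ ∪ v)) *
           (∑ v ∈ ((X.link τ).K 1).filter (fun v => v ⊆ η), φ (τ ∪ v))) := by
      simp only [WSC.normSq, WSC.inn, WSC.d, WSC.localize]
      rfl
    rw [step1]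
    have : ∀ η ∈ (X.link τ).K 2, X.m (τ ∪ η) *
          ((∑ v ∈ ((X.link τ).K 1).filter (fun v => v ⊆ η), φ (τ ∪ v)) *
           (∑ v ∈ ((X.link τ).K 1).filter (fun v => v ⊆ η), φ (τ ∪ v))) =
        (∑ v ∈ ((X.link τ).K 1).filter (fun v => v ⊆ η), X.m (τ ∪ η) * (φ (τ ∪ v) * φ (τ ∪ v))) +
          ∑ v ∈ ((X.link τ).K 1).filter (fun v => v ⊆ η),
            ∑ v' ∈ (((X.link τ).K 1).filter (fun v => v ⊆ η)).erase v,
              X.m (τ ∪ η) * (φ (τ ∪ v) * φ (τ ∪ v')) :=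
      fun η _ => expand_sq _ _ _
    rw [Finset.sum_congr rfl this, Finset.sum_add_distrib]
    congr 1
    rw [sum_filter_swap]
    refine Finset.sum_congr rfl fun v hv => ?_
    rw [← Finset.sum_mul]
    congr 1
    exact (link_weight hdc hwt hln hτm.2 hv).symm
  -- assemble RHS
  rw [hL, Finset.sum_congr rfl (fun τ hτ => by rw [hA τ hτ, hB τ]),
    Finset.sum_congr rfl (fun τ _ => by
      show _ = (∑ v ∈ (X.link τ).K 1, X.m (τ ∪ v) * (φ (τ ∪ v) * φ (τ ∪ v)))
        + (∑ η ∈ (X.link τ).K 2,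
            ∑ v ∈ ((X.link τ).K 1).filter (fun v => v ⊆ η),
              ∑ v' ∈ (((X.link τ).K 1).filter (fun v => v ⊆ η)).erase v,
                X.m (τ ∪ η) * (φ (τ ∪ v) * φ (τ ∪ v')))
        - ((l : ℝ) / ((l : ℝ) + 1)) *
            (∑ v ∈ (X.link τ).K 1, X.m (τ ∪ v) * (φ (τ ∪ v) * φ (τ ∪ v)))
      ring)]
  rw [Finset.sum_sub_distrib, Finset.sum_add_distrib]
  rw [sum_over_links hdc (fun ρ => X.m ρ * (φ ρ * φ ρ)), ← cross_eq hdc φ, ← hC]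
  rw [← Finset.mul_sum]
  have hsum : ∑ τ ∈ X.K l, ((l : ℝ) / ((l : ℝ) + 1)) *
      ∑ v ∈ (X.link τ).K 1, X.m (τ ∪ v) * (φ (τ ∪ v) * φ (τ ∪ v)) =
      ((l : ℝ) / ((l : ℝ) + 1)) * (((l : ℝ) + 1) * S) := by
    rw [← Finset.mul_sum, sum_over_links hdc (fun ρ => X.m ρ * (φ ρ * φ ρ)), ← Finset.mul_sum, hS]
  rw [hsum, ← hS]
  have hne : (l : ℝ) + 1 ≠ 0 := by positivity
  field_simp
  ring
end
end

section
/- For every 0 ≤ k ≤ n−1 and every φ ∈ C^k(X,ℝ), ‖dφ‖² = ‖d*φ‖² + ‖φ‖² + Σ_{τ ∈ X(k−1)} ⟨ (M')⁺_{τ,0} (I − M⁻_{τ,0}) φ_τ , φ_τ ⟩. -/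
/-!
Framework: a pure `n`-dimensional finite weighted simplicial complex, following
Kaufman–Oppenheim, "High Order Random Walks: Beyond Spectral Gap".

A complex is given by its finset of faces (finsets of a vertex type `V`) together with
a weight function `m`.  We index levels by **cardinality**: `X.K c` is the set of faces
with `c` elements, i.e. the set `X(k)` of `k`-dimensional faces for `k = c - 1`
(so `X(-1) = X.K 0`, and a pure `n`-dimensional complex has top level `X.K (n+1)`).
-/

noncomputable section

open Finset

open WSC
namespace WSC

variable {V : Type*} [DecidableEq V]

lemma mem_K_iff {X : WSC V} {c : ℕ} {σ : Finset V} :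
    σ ∈ X.K c ↔ σ ∈ X.faces ∧ σ.card = c := by
  simp [WSC.K]

lemma mem_link_iff {X : WSC V} {τ η : Finset V} :
    η ∈ (X.link τ).faces ↔ η ∈ X.faces ∧ η ∩ τ = ∅ ∧ τ ∪ η ∈ X.faces := by
  simp [WSC.link]

lemma link_m (X : WSC V) (τ η : Finset V) : (X.link τ).m η = X.m (τ ∪ η) := rfl

lemma weight_split {X : WSC V} {n : ℕ} (hX : X.IsWSC n) {a : Finset V}
    (ha : a ∈ X.faces) (hc : a.card ≤ n) :
    X.m a = ∑ σ ∈ (X.K (a.card + 1)).filter (fun σ => a ⊆ σ), X.m σ := by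
  rw [hX.2.2.2.2.2 ha hc]
  apply Finset.sum_congr _ (fun _ _ => rfl)
  ext σ
  simp only [WSC.K, Finset.mem_filter]
  tauto

lemma sum_filter_comm {α β M : Type*} [AddCommMonoid M] (T : Finset α) (A : Finset β)
    (p : α → β → Prop) [∀ a b, Decidable (p a b)] (f : α → β → M) :
    ∑ σ ∈ T, ∑ a ∈ A.filter (fun a => p σ a), f σ a
      = ∑ a ∈ A, ∑ σ ∈ T.filter (fun σ => p σ a), f σ a := by
  simp only [Finset.sum_filter]
  exact Finset.sum_comm

lemma union_sdiff_union_eq {τ η η' : Finset V} (h1 : η ∩ τ = ∅) (h3 : η ∩ η' = ∅) :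
    (τ ∪ η) \ (τ ∪ η') = η := by
  ext x
  simp only [Finset.mem_sdiff, Finset.mem_union, not_or]
  constructor
  · rintro ⟨h | h, hτ, _⟩
    · exact absurd h hτ
    · exact h
  · intro hx
    have hxτ : x ∉ τ := fun hxτ =>
      (Finset.eq_empty_iff_forall_notMem.mp h1 x) (Finset.mem_inter.mpr ⟨hx, hxτ⟩)
    have hxη' : x ∉ η' := fun h' =>
      (Finset.eq_empty_iff_forall_notMem.mp h3 x) (Finset.mem_inter.mpr ⟨hx, h'⟩)
    exact ⟨Or.inr hx, hxτ, hxη'⟩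

lemma union_inter_union_eq {τ η η' : Finset V} (h1 : η ∩ τ = ∅) (h2 : η' ∩ τ = ∅)
    (h3 : η ∩ η' = ∅) : (τ ∪ η) ∩ (τ ∪ η') = τ := by
  ext x
  simp only [Finset.mem_inter, Finset.mem_union]
  constructor
  · rintro ⟨hx | hx, hy | hy⟩
    · exact hx
    · exact hx
    · exact hy
    · exact absurd (Finset.mem_inter.mpr ⟨hx, hy⟩) (by simp [h3])
  · intro hx
    exact ⟨Or.inl hx, Or.inl hx⟩

lemma inter_eq_empty_of_card_union {η η' : Finset V} (h1 : η.card = 1) (h2 : η'.card = 1)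
    (h : (η ∪ η').card = 2) : η ∩ η' = ∅ := by
  have := Finset.card_union_add_card_inter η η'
  rw [h, h1, h2] at this
  exact Finset.card_eq_zero.mp (by omega)

end WSC
namespace WSC
variable {V : Type*} [DecidableEq V]

/-- The set of ordered pairs of distinct `(k+1)`-element faces whose union is a face. -/
def pairs (X : WSC V) (k : ℕ) : Finset (Finset V × Finset V) :=
  ((X.K (k+1)) ×ˢ (X.K (k+1))).filter (fun p => p.1 ≠ p.2 ∧ p.1 ∪ p.2 ∈ X.K (k+2))

lemma mem_pairs {X : WSC V} {k : ℕ} {p : Finset V × Finset V} :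
    p ∈ X.pairs k ↔ p.1 ∈ X.K (k+1) ∧ p.2 ∈ X.K (k+1) ∧ p.1 ≠ p.2 ∧
      p.1 ∪ p.2 ∈ X.K (k+2) := by
  simp only [pairs, Finset.mem_filter, Finset.mem_product]
  tauto

lemma sigma_eq_union {k : ℕ} {a b σ : Finset V} (hab : a ≠ b) (ha : a.card = k+1)
    (hb : b.card = k+1) (hσ : σ.card = k+2) (haσ : a ⊆ σ) (hbσ : b ⊆ σ) : σ = a ∪ b := by
  have hsub : a ∪ b ⊆ σ := Finset.union_subset haσ hbσ
  have hle : (a ∪ b).card ≤ k + 2 := hσ ▸ Finset.card_le_card hsub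
  by_cases hcard : (a ∪ b).card ≤ k + 1
  · have h1 : a = a ∪ b :=
      Finset.eq_of_subset_of_card_le Finset.subset_union_left (by omega)
    have hba : b ⊆ a := h1 ▸ Finset.subset_union_right
    exact absurd (Finset.eq_of_subset_of_card_le hba (by omega)).symm hab
  · exact (Finset.eq_of_subset_of_card_le hsub (by omega)).symm

lemma lemA {X : WSC V} {n : ℕ} (hX : X.IsWSC n) {k : ℕ} (hk : k < n) (φ : Finset V → ℝ) :
    X.normSq (k + 2) (X.d (k + 1) φ) =
      X.normSq (k + 1) φ + ∑ p ∈ X.pairs k, X.m (p.1 ∪ p.2) * (φ p.1 * φ p.2) := by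
  have step1 : X.normSq (k + 2) (X.d (k + 1) φ) =
      ∑ σ ∈ X.K (k+2), ∑ p ∈ (((X.K (k+1)).filter (fun a => a ⊆ σ)) ×ˢ
        ((X.K (k+1)).filter (fun a => a ⊆ σ))), X.m σ * (φ p.1 * φ p.2) := by
    unfold normSq inn d
    refine Finset.sum_congr rfl (fun σ _ => ?_)
    rw [Finset.sum_product, Finset.sum_mul_sum, Finset.mul_sum]
    exact Finset.sum_congr rfl fun a _ => Finset.mul_sum _ _ _
  rw [step1]
  have step2 : ∀ σ ∈ X.K (k+2),
      (∑ p ∈ (((X.K (k+1)).filter (fun a => a ⊆ σ)) ×ˢ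
        ((X.K (k+1)).filter (fun a => a ⊆ σ))), X.m σ * (φ p.1 * φ p.2)) =
      (∑ a ∈ (X.K (k+1)).filter (fun a => a ⊆ σ), X.m σ * (φ a * φ a)) +
      (∑ p ∈ ((((X.K (k+1)).filter (fun a => a ⊆ σ)) ×ˢ
        ((X.K (k+1)).filter (fun a => a ⊆ σ))).filter (fun p => ¬ p.1 = p.2)),
        X.m σ * (φ p.1 * φ p.2)) := by
    intro σ _
    rw [← Finset.sum_filter_add_sum_filter_not (((X.K (k+1)).filter (fun a => a ⊆ σ)) ×ˢ
        ((X.K (k+1)).filter (fun a => a ⊆ σ))) (fun p => p.1 = p.2)]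
    congr 1
    refine Finset.sum_nbij' (fun p => p.1) (fun a => (a, a)) ?_ ?_ ?_ ?_ ?_
    · intro p hp
      simp only [Finset.mem_filter, Finset.mem_product] at hp ⊢
      exact hp.1.1
    · intro a ha
      simp only [Finset.mem_filter, Finset.mem_product]
      simp only [Finset.mem_filter] at ha
      exact ⟨⟨ha, ha⟩, trivial⟩
    · rintro ⟨a, b⟩ hp
      simp only [Finset.mem_filter, Finset.mem_product] at hp
      simp only [hp.2]
    · intro a _; rfl
    · intro p hp
      simp only [Finset.mem_filter, Finset.mem_product] at hp
      rw [← hp.2]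
  rw [Finset.sum_congr rfl step2, Finset.sum_add_distrib]
  congr 1
  · -- diagonal
    rw [sum_filter_comm]
    unfold normSq inn
    refine Finset.sum_congr rfl (fun a ha => ?_)
    rw [← Finset.sum_mul]
    rw [mem_K_iff] at ha
    have : X.m a = ∑ σ ∈ (X.K (k+2)).filter (fun σ => a ⊆ σ), X.m σ := by
      have := weight_split hX ha.1 (by omega)
      rwa [ha.2] at this
    rw [← this]
  · -- off-diagonal
    rw [Finset.sum_sigma']
    refine Finset.sum_nbij' (fun x => x.2) (fun p => ⟨p.1 ∪ p.2, p⟩) ?_ ?_ ?_ ?_ ?_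
    · rintro ⟨σ, p⟩ hx
      simp only [Finset.mem_sigma, Finset.mem_filter, Finset.mem_product, mem_K_iff] at hx
      obtain ⟨⟨hσf, hσc⟩, ⟨⟨⟨haf, hac⟩, haσ⟩, ⟨hbf, hbc⟩, hbσ⟩, hne⟩ := hx
      have hσeq : σ = p.1 ∪ p.2 := sigma_eq_union hne hac hbc hσc haσ hbσ
      rw [mem_pairs, mem_K_iff, mem_K_iff, mem_K_iff]
      exact ⟨⟨haf, hac⟩, ⟨hbf, hbc⟩, hne, hσeq ▸ ⟨hσf, hσc⟩⟩
    · intro p hp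
      rw [mem_pairs] at hp
      obtain ⟨ha, hb, hne, hu⟩ := hp
      simp only [Finset.mem_sigma, Finset.mem_filter, Finset.mem_product]
      exact ⟨hu, ⟨⟨ha, Finset.subset_union_left⟩, hb, Finset.subset_union_right⟩, hne⟩
    · rintro ⟨σ, p⟩ hx
      simp only [Finset.mem_sigma, Finset.mem_filter, Finset.mem_product, mem_K_iff] at hx
      obtain ⟨⟨hσf, hσc⟩, ⟨⟨⟨haf, hac⟩, haσ⟩, ⟨hbf, hbc⟩, hbσ⟩, hne⟩ := hx
      have hσeq : σ = p.1 ∪ p.2 := sigma_eq_union hne hac hbc hσc haσ hbσ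
      simp [hσeq]
    · intro p _; rfl
    · rintro ⟨σ, p⟩ hx
      simp only [Finset.mem_sigma, Finset.mem_filter, Finset.mem_product, mem_K_iff] at hx
      obtain ⟨⟨hσf, hσc⟩, ⟨⟨⟨haf, hac⟩, haσ⟩, ⟨hbf, hbc⟩, hbσ⟩, hne⟩ := hx
      have hσeq : σ = p.1 ∪ p.2 := sigma_eq_union hne hac hbc hσc haσ hbσ
      simp [hσeq]

end WSC
namespace WSC
variable {V : Type*} [DecidableEq V]

lemma mem_linkK_iff {X : WSC V} {τ η : Finset V} {c : ℕ} :
    η ∈ (X.link τ).K c ↔ (η ∈ X.faces ∧ η ∩ τ = ∅ ∧ τ ∪ η ∈ X.faces) ∧ η.card = c := by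
  rw [mem_K_iff, mem_link_iff]

lemma disj_of_inter_empty {s t : Finset V} (h : s ∩ t = ∅) : Disjoint t s :=
  Finset.disjoint_iff_inter_eq_empty.mpr (by rw [Finset.inter_comm]; exact h)

lemma lemC {X : WSC V} {n : ℕ} (hX : X.IsWSC n) {k : ℕ} (hk : k < n) (φ : Finset V → ℝ) :
    ∑ τ ∈ X.K k, ∑ η ∈ (X.link τ).K 1,
        ∑ η' ∈ ((X.link τ).K 1).filter (fun η' => η ∪ η' ∈ (X.link τ).K 2),
          (X.link τ).m (η ∪ η') * (localize φ τ η' * localize φ τ η)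
      = ∑ p ∈ X.pairs k, X.m (p.1 ∪ p.2) * (φ p.1 * φ p.2) := by
  obtain ⟨-, hdown, -, -, -, -⟩ := hX
  have hmap : ∀ p ∈ X.pairs k, p.1 ∩ p.2 ∈ X.K k := by
    intro p hp
    rw [mem_pairs] at hp
    obtain ⟨ha, hb, hne, hu⟩ := hp
    rw [mem_K_iff] at ha hb hu ⊢
    refine ⟨hdown ha.1 Finset.inter_subset_left, ?_⟩
    have := Finset.card_union_add_card_inter p.1 p.2
    omega
  rw [← Finset.sum_fiberwise_of_maps_to hmap (fun p => X.m (p.1 ∪ p.2) * (φ p.1 * φ p.2))]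
  refine Finset.sum_congr rfl (fun τ hτ => ?_)
  rw [mem_K_iff] at hτ
  obtain ⟨hτf, hτc⟩ := hτ
  rw [Finset.sum_sigma']
  refine Finset.sum_nbij' (fun x => (τ ∪ x.1, τ ∪ x.2)) (fun p => ⟨p.1 \ p.2, p.2 \ p.1⟩)
    ?_ ?_ ?_ ?_ ?_
  · rintro ⟨η, η'⟩ hx
    simp only [Finset.mem_sigma, Finset.mem_filter, mem_linkK_iff] at hx
    obtain ⟨⟨⟨hηf, hητ, hτη⟩, hηc⟩, ⟨⟨hη'f, hη'τ, hτη'⟩, hη'c⟩, ⟨hUf, hUτ, hτU⟩, hUc⟩ := hx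
    have hdisj : η ∩ η' = ∅ := inter_eq_empty_of_card_union hηc hη'c hUc
    have huu : (τ ∪ η) ∪ (τ ∪ η') = τ ∪ (η ∪ η') := by
      rw [Finset.union_union_union_comm, Finset.union_self]
    have hne : (τ ∪ η) ≠ (τ ∪ η') := by
      intro h
      have h1 : (τ ∪ η) \ (τ ∪ η') = η := union_sdiff_union_eq hητ hdisj
      rw [h, sdiff_self] at h1
      rw [← h1] at hηc
      simp at hηc
    simp only [Finset.mem_filter, mem_pairs, mem_K_iff]
    refine ⟨⟨⟨hτη, ?_⟩, ⟨hτη', ?_⟩, hne, ?_⟩, union_inter_union_eq hητ hη'τ hdisj⟩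
    · rw [Finset.card_union_of_disjoint (disj_of_inter_empty hητ), hτc, hηc]
    · rw [Finset.card_union_of_disjoint (disj_of_inter_empty hη'τ), hτc, hη'c]
    · rw [huu]
      refine ⟨hτU, ?_⟩
      rw [Finset.card_union_of_disjoint (disj_of_inter_empty hUτ), hτc, hUc]
  · intro p hp
    simp only [Finset.mem_filter, mem_pairs, mem_K_iff] at hp
    obtain ⟨⟨⟨haf, hac⟩, ⟨hbf, hbc⟩, hne, hUf, hUc⟩, hint⟩ := hp
    have hcint : (p.1 ∩ p.2).card = k := by
      have := Finset.card_union_add_card_inter p.1 p.2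
      omega
    have hc1 : (p.1 \ p.2).card = 1 := by
      have := Finset.card_sdiff_add_card_inter p.1 p.2
      omega
    have hc2 : (p.2 \ p.1).card = 1 := by
      have := Finset.card_sdiff_add_card_inter p.2 p.1
      rw [Finset.inter_comm] at this
      omega
    have hu1 : τ ∪ (p.1 \ p.2) = p.1 := by
      rw [← hint, Finset.union_comm, Finset.sdiff_union_inter]
    have hu2 : τ ∪ (p.2 \ p.1) = p.2 := by
      rw [← hint, Finset.inter_comm, Finset.union_comm, Finset.sdiff_union_inter]
    have hd1 : (p.1 \ p.2) ∩ τ = ∅ := by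
      rw [← hint]
      ext x
      simp only [Finset.mem_inter, Finset.mem_sdiff, Finset.notMem_empty, iff_false]
      tauto
    have hd2 : (p.2 \ p.1) ∩ τ = ∅ := by
      rw [← hint]
      ext x
      simp only [Finset.mem_inter, Finset.mem_sdiff, Finset.notMem_empty, iff_false]
      tauto
    have hdd : (p.1 \ p.2) ∩ (p.2 \ p.1) = ∅ :=
      Finset.disjoint_iff_inter_eq_empty.mp disjoint_sdiff_sdiff
    have hUsub : (p.1 \ p.2) ∪ (p.2 \ p.1) ⊆ p.1 ∪ p.2 :=
      Finset.union_subset_union Finset.sdiff_subset Finset.sdiff_subset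
    have hUU : τ ∪ ((p.1 \ p.2) ∪ (p.2 \ p.1)) = p.1 ∪ p.2 := by
      rw [← Finset.union_self τ, Finset.union_union_union_comm, hu1, hu2]
    simp only [Finset.mem_sigma, Finset.mem_filter, mem_linkK_iff]
    refine ⟨⟨⟨hdown haf Finset.sdiff_subset, hd1, by rw [hu1]; exact haf⟩, hc1⟩,
      ⟨⟨hdown hbf Finset.sdiff_subset, hd2, by rw [hu2]; exact hbf⟩, hc2⟩,
      ⟨⟨hdown hUf hUsub, ?_, by rw [hUU]; exact hUf⟩, ?_⟩⟩
    · rw [Finset.union_inter_distrib_right, hd1, hd2, Finset.union_self]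
    · rw [Finset.card_union_of_disjoint (Finset.disjoint_iff_inter_eq_empty.mpr hdd)]
      omega
  · rintro ⟨η, η'⟩ hx
    simp only [Finset.mem_sigma, Finset.mem_filter, mem_linkK_iff] at hx
    obtain ⟨⟨⟨hηf, hητ, hτη⟩, hηc⟩, ⟨⟨hη'f, hη'τ, hτη'⟩, hη'c⟩, ⟨hUf, hUτ, hτU⟩, hUc⟩ := hx
    have hdisj : η ∩ η' = ∅ := inter_eq_empty_of_card_union hηc hη'c hUc
    have h1 : (τ ∪ η) \ (τ ∪ η') = η := union_sdiff_union_eq hητ hdisj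
    have h2 : (τ ∪ η') \ (τ ∪ η) = η' :=
      union_sdiff_union_eq hη'τ (by rw [Finset.inter_comm]; exact hdisj)
    simp [h1, h2]
  · intro p hp
    simp only [Finset.mem_filter, mem_pairs, mem_K_iff] at hp
    obtain ⟨⟨⟨haf, hac⟩, ⟨hbf, hbc⟩, hne, hUf, hUc⟩, hint⟩ := hp
    have hu1 : τ ∪ (p.1 \ p.2) = p.1 := by
      rw [← hint, Finset.union_comm, Finset.sdiff_union_inter]
    have hu2 : τ ∪ (p.2 \ p.1) = p.2 := by
      rw [← hint, Finset.inter_comm, Finset.union_comm, Finset.sdiff_union_inter]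
    simp [hu1, hu2]
  · rintro ⟨η, η'⟩ hx
    simp only [Finset.mem_sigma, Finset.mem_filter, mem_linkK_iff] at hx
    obtain ⟨⟨⟨hηf, hητ, hτη⟩, hηc⟩, ⟨⟨hη'f, hη'τ, hτη'⟩, hη'c⟩, ⟨hUf, hUτ, hτU⟩, hUc⟩ := hx
    have huu : (τ ∪ η) ∪ (τ ∪ η') = τ ∪ (η ∪ η') := by
      rw [Finset.union_union_union_comm, Finset.union_self]
    simp only [link_m, localize, huu]
    ring

end WSC
namespace WSC
variable {V : Type*} [DecidableEq V]

lemma linkK0_eq {X : WSC V} {n : ℕ} (hX : X.IsWSC n) {τ : Finset V} (hτf : τ ∈ X.faces) :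
    (X.link τ).K 0 = {∅} := by
  ext σ
  simp only [mem_linkK_iff, Finset.card_eq_zero, Finset.mem_singleton]
  constructor
  · rintro ⟨-, h⟩; exact h
  · rintro rfl
    exact ⟨⟨hX.2.1 hτf (Finset.empty_subset τ), Finset.empty_inter τ, by
      rw [Finset.union_empty]; exact hτf⟩, rfl⟩

lemma link_reindex {X : WSC V} {n : ℕ} (hX : X.IsWSC n) {k : ℕ} {τ : Finset V}
    (hτ : τ ∈ X.K k) (g : Finset V → ℝ) :
    ∑ η ∈ (X.link τ).K 1, g (τ ∪ η) = ∑ b ∈ (X.K (k+1)).filter (fun b => τ ⊆ b), g b := by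
  obtain ⟨hτf, hτc⟩ := mem_K_iff.mp hτ
  refine Finset.sum_nbij' (fun η => τ ∪ η) (fun b => b \ τ) ?_ ?_ ?_ ?_ ?_
  · intro η hη
    rw [mem_linkK_iff] at hη
    obtain ⟨⟨hηf, hητ, hτη⟩, hηc⟩ := hη
    simp only [Finset.mem_filter, mem_K_iff]
    exact ⟨⟨hτη, by rw [Finset.card_union_of_disjoint (disj_of_inter_empty hητ), hτc, hηc]⟩,
      Finset.subset_union_left⟩
  · intro b hb
    simp only [Finset.mem_filter, mem_K_iff] at hb
    obtain ⟨⟨hbf, hbc⟩, hsub⟩ := hb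
    rw [mem_linkK_iff]
    refine ⟨⟨hX.2.1 hbf Finset.sdiff_subset, Finset.sdiff_inter_self τ b, by
      rw [Finset.union_sdiff_of_subset hsub]; exact hbf⟩, ?_⟩
    rw [Finset.card_sdiff_of_subset hsub, hbc, hτc]
    omega
  · intro η hη
    rw [mem_linkK_iff] at hη
    obtain ⟨⟨hηf, hητ, hτη⟩, hηc⟩ := hη
    have := union_sdiff_union_eq hητ (Finset.inter_empty η)
    rwa [Finset.union_empty] at this
  · intro b hb
    simp only [Finset.mem_filter, mem_K_iff] at hb
    exact Finset.union_sdiff_of_subset hb.2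
  · intro η _; rfl

lemma link_rowsum {X : WSC V} {n : ℕ} (hX : X.IsWSC n) {k : ℕ} (hk : k < n) {τ : Finset V}
    (hτ : τ ∈ X.K k) {η : Finset V} (hη : η ∈ (X.link τ).K 1) :
    ∑ η' ∈ ((X.link τ).K 1).filter (fun η' => η ∪ η' ∈ (X.link τ).K 2),
      (X.link τ).m (η ∪ η') = (X.link τ).m η := by
  obtain ⟨hτf, hτc⟩ := mem_K_iff.mp hτ
  rw [mem_linkK_iff] at hη
  obtain ⟨⟨hηf, hητ, hτη⟩, hηc⟩ := hη
  have hdown := hX.2.1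
  have hcτη : (τ ∪ η).card = k + 1 := by
    rw [Finset.card_union_of_disjoint (disj_of_inter_empty hητ), hτc, hηc]
  have key : ∑ η' ∈ ((X.link τ).K 1).filter (fun η' => η ∪ η' ∈ (X.link τ).K 2),
      (X.link τ).m (η ∪ η')
      = ∑ σ ∈ (X.K (k+2)).filter (fun σ => τ ∪ η ⊆ σ), X.m σ := by
    refine Finset.sum_nbij' (fun η' => (τ ∪ η) ∪ η') (fun σ => σ \ (τ ∪ η)) ?_ ?_ ?_ ?_ ?_
    · intro η' hη'
      simp only [Finset.mem_filter, mem_linkK_iff] at hη'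
      obtain ⟨⟨⟨hη'f, hη'τ, hτη'⟩, hη'c⟩, ⟨hUf, hUτ, hτU⟩, hUc⟩ := hη'
      simp only [Finset.mem_filter, mem_K_iff]
      constructor
      · rw [Finset.union_assoc]
        exact ⟨hτU, by
          rw [Finset.card_union_of_disjoint (disj_of_inter_empty hUτ), hτc, hUc]⟩
      · exact Finset.subset_union_left
    · intro σ hσ
      simp only [Finset.mem_filter, mem_K_iff] at hσ
      obtain ⟨⟨hσf, hσc⟩, hsub⟩ := hσ
      have hτσ : τ ⊆ σ := Finset.subset_union_left.trans hsub
      have hησ : η ⊆ σ := Finset.subset_union_right.trans hsub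
      have hueq : η ∪ (σ \ (τ ∪ η)) = σ \ τ := by
        ext x
        simp only [Finset.mem_union, Finset.mem_sdiff, Finset.notMem_empty]
        constructor
        · rintro (hx | ⟨hxσ, hx⟩)
          · exact ⟨hησ hx, fun hxτ =>
              (Finset.eq_empty_iff_forall_notMem.mp hητ x) (Finset.mem_inter.mpr ⟨hx, hxτ⟩)⟩
          · exact ⟨hxσ, fun hxτ => hx (Or.inl hxτ)⟩
        · rintro ⟨hxσ, hxτ⟩
          by_cases hxη : x ∈ η
          · exact Or.inl hxη
          · exact Or.inr ⟨hxσ, by simp [hxτ, hxη]⟩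
      simp only [Finset.mem_filter, mem_linkK_iff]
      refine ⟨⟨⟨hdown hσf Finset.sdiff_subset, ?_, ?_⟩, ?_⟩, ?_⟩
      · ext x
        simp only [Finset.mem_inter, Finset.mem_sdiff, Finset.mem_union,
          Finset.notMem_empty, iff_false]
        rintro ⟨⟨hxσ, hx⟩, hxτ⟩
        exact hx (Or.inl hxτ)
      · exact hdown hσf (Finset.union_subset hτσ Finset.sdiff_subset)
      · rw [Finset.card_sdiff_of_subset hsub, hσc, hcτη]; omega
      · rw [hueq]
        refine ⟨⟨hdown hσf Finset.sdiff_subset, Finset.sdiff_inter_self τ σ, by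
          rw [Finset.union_sdiff_of_subset hτσ]; exact hσf⟩, ?_⟩
        rw [Finset.card_sdiff_of_subset hτσ, hσc, hτc]; omega
    · intro η' hη'
      simp only [Finset.mem_filter, mem_linkK_iff] at hη'
      obtain ⟨⟨⟨hη'f, hη'τ, hτη'⟩, hη'c⟩, ⟨hUf, hUτ, hτU⟩, hUc⟩ := hη'
      have hdisj : η ∩ η' = ∅ := inter_eq_empty_of_card_union hηc hη'c hUc
      have h1 : η' ∩ (τ ∪ η) = ∅ := by
        rw [Finset.inter_union_distrib_left, hη'τ, Finset.inter_comm η' η, hdisj,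
          Finset.union_self]
      have := union_sdiff_union_eq (τ := τ ∪ η) (η := η') (η' := (∅ : Finset V)) h1
        (Finset.inter_empty η')
      rwa [Finset.union_empty] at this
    · intro σ hσ
      simp only [Finset.mem_filter, mem_K_iff] at hσ
      exact Finset.union_sdiff_of_subset hσ.2
    · intro η' _
      show X.m (τ ∪ (η ∪ η')) = X.m (τ ∪ η ∪ η')
      rw [Finset.union_assoc]
  rw [key, link_m]
  have := weight_split hX hτη (by omega)
  rw [hcτη] at this
  exact this.symm

end WSC
namespace WSC
variable {V : Type*} [DecidableEq V]

lemma lemB {X : WSC V} {n : ℕ} (hX : X.IsWSC n) {k : ℕ} (hk : k < n) (φ : Finset V → ℝ)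
    {τ : Finset V} (hτ : τ ∈ X.K k) :
    (X.link τ).inn 1 ((X.link τ).Mup' 1
        (fun η => localize φ τ η - (X.link τ).Mdown 1 (localize φ τ) η)) (localize φ τ)
    = (∑ η ∈ (X.link τ).K 1,
        ∑ η' ∈ ((X.link τ).K 1).filter (fun η' => η ∪ η' ∈ (X.link τ).K 2),
          (X.link τ).m (η ∪ η') * (localize φ τ η' * localize φ τ η))
      - X.m τ * (X.dStar k φ τ * X.dStar k φ τ) := by
  obtain ⟨hτf, hτc⟩ := mem_K_iff.mp hτ
  have hpos := hX.2.2.2.2.1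
  have hmτ : 0 < X.m τ := hpos hτf
  set ψ := localize φ τ with hψ
  set cst := X.dStar k φ τ with hcst
  have hsum1 : ∑ η ∈ (X.link τ).K 1, (X.link τ).m η * ψ η = X.m τ * cst := by
    have h1 : ∑ η ∈ (X.link τ).K 1, (X.link τ).m η * ψ η
        = ∑ b ∈ (X.K (k+1)).filter (fun b => τ ⊆ b), X.m b * φ b :=
      link_reindex hX hτ (fun b => X.m b * φ b)
    rw [h1, hcst]
    unfold dStar
    rw [Finset.mul_sum]
    refine Finset.sum_congr rfl (fun b _ => ?_)
    field_simp
  have hK0 := linkK0_eq hX hτf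
  have hm0 : (X.link τ).m ∅ = X.m τ := by rw [link_m, Finset.union_empty]
  have hMdown : ∀ η ∈ (X.link τ).K 1, (X.link τ).Mdown 1 ψ η = cst := by
    intro η hη
    obtain ⟨⟨hηf, hητ, hτη⟩, hηc⟩ := mem_linkK_iff.mp hη
    have hdisj : ∀ η' ∈ ((X.link τ).K 1).erase η, η ∩ η' = ∅ := by
      intro η' h
      obtain ⟨hne, h1⟩ := Finset.mem_erase.mp h
      obtain ⟨-, hc''⟩ := mem_linkK_iff.mp h1
      obtain ⟨u, hu⟩ := Finset.card_eq_one.mp hηc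
      obtain ⟨v, hv⟩ := Finset.card_eq_one.mp hc''
      have huv : u ≠ v := by
        rintro rfl
        rw [hu, hv] at hne
        exact hne rfl
      rw [hu, hv]
      simp [huv]
    have hfilt : ((X.link τ).K (1-1)).filter (fun η'' => η'' ⊆ η) = {∅} := by
      rw [show (1-1 : ℕ) = 0 from rfl, hK0, Finset.filter_singleton,
        if_pos (Finset.empty_subset η)]
    have hfilt2 : ((X.link τ).K 1).filter
        (fun η' => η' ≠ η ∧ η ∩ η' ∈ (X.link τ).K (1-1)) = ((X.link τ).K 1).erase η := by
      ext η''
      simp only [Finset.mem_filter, Finset.mem_erase]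
      constructor
      · rintro ⟨h1, h2, -⟩
        exact ⟨h2, h1⟩
      · rintro ⟨hne, h1⟩
        refine ⟨h1, hne, ?_⟩
        rw [show (1-1 : ℕ) = 0 from rfl, hK0, Finset.mem_singleton]
        exact hdisj η'' (Finset.mem_erase.mpr ⟨hne, h1⟩)
    unfold Mdown
    rw [hfilt, hfilt2, Finset.sum_singleton]
    simp only [Nat.cast_one, one_mul, hm0]
    rw [Finset.sum_congr rfl (fun η' h => by rw [hdisj η' h, hm0])]
    simp only [div_mul_eq_mul_div]
    rw [← Finset.sum_div, ← add_div,
      Finset.add_sum_erase _ (fun η' => (X.link τ).m η' * ψ η') hη, hsum1,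
      mul_comm, mul_div_assoc, div_self hmτ.ne', mul_one]
  have key : ∀ η ∈ (X.link τ).K 1,
      (X.link τ).m η * ((X.link τ).Mup' 1 (fun η => ψ η - (X.link τ).Mdown 1 ψ η) η * ψ η)
      = ∑ η' ∈ ((X.link τ).K 1).filter (fun η' => η ∪ η' ∈ (X.link τ).K (1+1)),
          (X.link τ).m (η ∪ η') * ((ψ η' - cst) * ψ η) := by
    intro η hη
    obtain ⟨⟨hηf, hητ, hτη⟩, hηc⟩ := mem_linkK_iff.mp hη
    have hmη : (X.link τ).m η ≠ 0 := by
      rw [link_m]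
      exact (hpos hτη).ne'
    have e1 : (X.link τ).Mup' 1 (fun η => ψ η - (X.link τ).Mdown 1 ψ η) η
        = 2 * ∑ η' ∈ ((X.link τ).K 1).filter (fun η' => η ∪ η' ∈ (X.link τ).K (1+1)),
            ((X.link τ).m (η ∪ η') / ((1+1) * (X.link τ).m η)) *
              ((fun η => ψ η - (X.link τ).Mdown 1 ψ η) η') := by
      unfold Mup' Mup
      simp only [Nat.cast_one]
      ring
    rw [e1]
    have e2 : (X.link τ).m η *
        ((2 * ∑ η' ∈ ((X.link τ).K 1).filter (fun η' => η ∪ η' ∈ (X.link τ).K (1+1)),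
            ((X.link τ).m (η ∪ η') / ((1+1) * (X.link τ).m η)) *
              ((fun η => ψ η - (X.link τ).Mdown 1 ψ η) η')) * ψ η)
        = (2 * (X.link τ).m η * ψ η) *
          ∑ η' ∈ ((X.link τ).K 1).filter (fun η' => η ∪ η' ∈ (X.link τ).K (1+1)),
            ((X.link τ).m (η ∪ η') / ((1+1) * (X.link τ).m η)) *
              ((fun η => ψ η - (X.link τ).Mdown 1 ψ η) η') := by
      ring
    rw [e2, Finset.mul_sum]
    refine Finset.sum_congr rfl (fun η' hη' => ?_)
    obtain ⟨hη'K, -⟩ := Finset.mem_filter.mp hη'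
    simp only
    rw [hMdown η' hη'K]
    field_simp
    ring
  unfold inn
  rw [Finset.sum_congr rfl key]
  have expand : ∀ η ∈ (X.link τ).K 1,
      (∑ η' ∈ ((X.link τ).K 1).filter (fun η' => η ∪ η' ∈ (X.link τ).K (1+1)),
        (X.link τ).m (η ∪ η') * ((ψ η' - cst) * ψ η))
      = (∑ η' ∈ ((X.link τ).K 1).filter (fun η' => η ∪ η' ∈ (X.link τ).K (1+1)),
          (X.link τ).m (η ∪ η') * (ψ η' * ψ η))
        - (X.link τ).m η * (cst * ψ η) := by
    intro η hη
    rw [← link_rowsum hX hk hτ hη, Finset.sum_mul, ← Finset.sum_sub_distrib]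
    refine Finset.sum_congr rfl (fun η' _ => ?_)
    ring
  rw [Finset.sum_congr rfl expand, Finset.sum_sub_distrib]
  have last : ∑ η ∈ (X.link τ).K 1, (X.link τ).m η * (cst * ψ η)
      = X.m τ * (cst * cst) := by
    have : ∀ η ∈ (X.link τ).K 1,
        (X.link τ).m η * (cst * ψ η) = cst * ((X.link τ).m η * ψ η) := by
      intro η _
      ring
    rw [Finset.sum_congr rfl this, ← Finset.mul_sum, hsum1]
    ring
  rw [last]

end WSC
/-- For every `0 ≤ k ≤ n-1` and every `φ ∈ C^k(X,ℝ)`,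
`‖dφ‖² = ‖d*φ‖² + ‖φ‖² + Σ_{τ ∈ X(k-1)} ⟨(M')⁺_{τ,0} (I - M⁻_{τ,0}) φ_τ, φ_τ⟩`.
(Here `φ` lives at cardinality level `k+1`, `τ` ranges over `X(k-1)`, i.e. level `k`,
and `φ_τ ∈ C⁰(X_τ,ℝ)` lives at link level `1`.) -/
theorem d_normSq_decomposition {V : Type*} [DecidableEq V] (X : WSC V) (n : ℕ)
    (hX : X.IsWSC n) (k : ℕ) (hk : k < n) (φ : Finset V → ℝ) :
    X.normSq (k + 2) (X.d (k + 1) φ) =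
      X.normSq k (X.dStar k φ) + X.normSq (k + 1) φ +
        ∑ τ ∈ X.K k,
          (X.link τ).inn 1
            ((X.link τ).Mup' 1
              (fun η => localize φ τ η - (X.link τ).Mdown 1 (localize φ τ) η))
            (localize φ τ) := by
  rw [lemA hX hk φ]
  rw [Finset.sum_congr rfl (fun τ hτ => lemB hX hk φ hτ), Finset.sum_sub_distrib,
    lemC hX hk φ]
  have hds : X.normSq k (X.dStar k φ)
      = ∑ τ ∈ X.K k, X.m τ * (X.dStar k φ τ * X.dStar k φ τ) := rfl
  rw [hds]
  ring
end
end
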